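/- arXiv:2507.15039 — 4 statements merged into one kernel-verified Lean document; each statement's English description precedes it below -/
import Mathlib

section
/- Every root α ∈ Φ, written (uniquely) as α = Σ_{i∈I} k_i e_i with k_i ∈ ℤ, satisfies either k_i ≥ 0 for all i ∈ I or k_i ≤ 0 for all i ∈ I. -/
set_option linter.unusedSectionVars false

open Finset

noncomputable section

namespace ADE

variable {I : Type*} [Fintype I] [DecidableEq I]

/-- The coefficient matrix of the bilinear form attached to the graph `Γ`:
`-2` on the diagonal, `1` for adjacent pairs of vertices, `0` otherwise. -/
def cartan (G : SimpleGraph I) [DecidableRel G.Adj] : Matrix I I ℤ :=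
  Matrix.of fun i j => if i = j then -2 else if G.Adj i j then 1 else 0

/-- The symmetric bilinear form `B` on `ℤ^I` determined by
`B(e_i,e_i) = -2`, `B(e_i,e_j) = 1` for adjacent `i ≠ j`, and `0` otherwise. -/
def Bform (G : SimpleGraph I) [DecidableRel G.Adj] : LinearMap.BilinForm ℤ (I → ℤ) :=
  Matrix.toBilin' (cartan G)

/-- Negative definiteness of the induced real bilinear form on `ℝ^I`. -/
def NegDef (G : SimpleGraph I) [DecidableRel G.Adj] : Prop :=
  ∀ v : I → ℝ, v ≠ 0 → (∑ i, ∑ j, v i * (cartan G i j : ℝ) * v j) < 0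

/-- `α ∈ ℤ^I` is a root when `B(α,α) = -2`. -/
def IsRoot (G : SimpleGraph I) [DecidableRel G.Adj] (α : I → ℤ) : Prop :=
  Bform G α α = -2

variable (G : SimpleGraph I) [DecidableRel G.Adj]

lemma cartan_symm (i j : I) : cartan G i j = cartan G j i := by
  rcases eq_or_ne i j with h | h
  · subst h; rfl
  · by_cases hadj : G.Adj i j
    · simp [cartan, h, h.symm, hadj, hadj.symm]
    · have h' : ¬ G.Adj j i := fun hc => hadj hc.symm
      simp [cartan, h, h.symm, hadj, h']

lemma Bform_apply (v w : I → ℤ) :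
    Bform G v w = ∑ i, ∑ j, v i * cartan G i j * w j :=
  Matrix.toBilin'_apply _ _ _

lemma Bform_comm (v w : I → ℤ) : Bform G v w = Bform G w v := by
  rw [Bform_apply, Bform_apply, Finset.sum_comm]
  exact Finset.sum_congr rfl fun j _ => Finset.sum_congr rfl fun i _ => by
    rw [cartan_symm]; ring

lemma cartan_diag (i : I) : cartan G i i = -2 := by simp [cartan]

lemma Bform_single (i j : I) :
    Bform G (Pi.single i 1) (Pi.single j 1) = cartan G i j := by
  rw [Bform_apply]
  simp [Pi.single_apply]

lemma Bform_single_self (i : I) :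
    Bform G (Pi.single i 1) (Pi.single i 1) = -2 := by
  rw [Bform_single, cartan_diag]

/-- `IsRoot` is preserved by negation. -/
lemma isRoot_neg {α : I → ℤ} (h : IsRoot G α) : IsRoot G (-α) := by
  unfold IsRoot at h ⊢
  simpa [map_neg] using h

/-- The simple root `e_i` is a root. -/
lemma isRoot_single (i : I) : IsRoot G (Pi.single i 1) := Bform_single_self G i

/-- The reflection `s_i : v ↦ v + B(v,e_i)·e_i`. -/
def reflect (i : I) (v : I → ℤ) : I → ℤ :=
  v + Bform G v (Pi.single i 1) • Pi.single i 1

/-- The reflection `s_i` as a linear map. -/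
def reflectLM (i : I) : (I → ℤ) →ₗ[ℤ] (I → ℤ) :=
  LinearMap.id + (LinearMap.toSpanSingleton ℤ (I → ℤ) (Pi.single i 1)).comp
    ((Bform G).flip (Pi.single i 1))

lemma reflectLM_apply (i : I) (v : I → ℤ) : reflectLM G i v = reflect G i v := by
  simp [reflectLM, reflect, LinearMap.toSpanSingleton_apply]

/-- Reflections are isometries of `B`. -/
lemma Bform_reflect (i : I) (v w : I → ℤ) :
    Bform G (reflect G i v) (reflect G i w) = Bform G v w := by
  have h1 : Bform G (Pi.single i 1) w = Bform G w (Pi.single i 1) := Bform_comm G _ _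
  simp only [reflect, map_add, map_smul, LinearMap.add_apply, LinearMap.smul_apply,
    smul_eq_mul, Bform_single_self, h1]
  ring

lemma reflect_reflect (i : I) (v : I → ℤ) : reflect G i (reflect G i v) = v := by
  have h : Bform G (reflect G i v) (Pi.single i 1) = - Bform G v (Pi.single i 1) := by
    simp only [reflect, map_add, LinearMap.add_apply, map_smul, LinearMap.smul_apply,
      smul_eq_mul, Bform_single_self]
    ring
  conv_lhs => rw [reflect, h]
  rw [reflect, neg_smul, add_neg_cancel_right]

/-- The reflection `s_i` as a linear automorphism of `ℤ^I`. -/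
def reflectEquiv (i : I) : (I → ℤ) ≃ₗ[ℤ] (I → ℤ) where
  __ := reflectLM G i
  invFun := reflect G i
  left_inv := fun v => by
    show reflect G i (reflectLM G i v) = v
    rw [reflectLM_apply]; exact reflect_reflect G i v
  right_inv := fun v => by
    show reflectLM G i (reflect G i v) = v
    rw [reflectLM_apply]; exact reflect_reflect G i v

lemma reflectEquiv_apply (i : I) (v : I → ℤ) : reflectEquiv G i v = reflect G i v :=
  reflectLM_apply G i v

/-- The Weyl group `W`: the subgroup of the group of `ℤ`-linear automorphisms
of `ℤ^I` generated by the reflections `s_i`. -/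
def Weyl : Subgroup ((I → ℤ) ≃ₗ[ℤ] (I → ℤ)) :=
  Subgroup.closure (Set.range (reflectEquiv G))

lemma reflectEquiv_inv (i : I) : (reflectEquiv G i)⁻¹ = reflectEquiv G i := by
  apply LinearEquiv.toLinearMap_injective
  apply LinearMap.ext
  intro v
  have h1 : ((reflectEquiv G i)⁻¹ : (I → ℤ) ≃ₗ[ℤ] (I → ℤ)) v = (reflectEquiv G i).symm v := rfl
  show ((reflectEquiv G i)⁻¹ : (I → ℤ) ≃ₗ[ℤ] (I → ℤ)) v = reflectEquiv G i v
  rw [h1, reflectEquiv_apply]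
  rfl

lemma isRoot_reflect (i : I) {α : I → ℤ} (h : IsRoot G α) : IsRoot G (reflect G i α) := by
  unfold IsRoot at h ⊢
  rw [Bform_reflect]; exact h

/-- Every element of the Weyl group maps roots to roots. -/
lemma weyl_isRoot {w : (I → ℤ) ≃ₗ[ℤ] (I → ℤ)} (hw : w ∈ Weyl G) :
    ∀ α : I → ℤ, IsRoot G α → IsRoot G (w α) := by
  have main : (∀ α, IsRoot G α → IsRoot G (w α)) ∧ (∀ α, IsRoot G α → IsRoot G (w⁻¹ α)) := by
    induction hw using Subgroup.closure_induction with
    | mem x hx =>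
        obtain ⟨i, rfl⟩ := hx
        constructor
        · intro α hα; rw [reflectEquiv_apply]; exact isRoot_reflect G i hα
        · intro α hα; rw [reflectEquiv_inv, reflectEquiv_apply]; exact isRoot_reflect G i hα
    | one => exact ⟨fun α h => h, fun α h => by simpa using h⟩
    | mul x y hx hy ihx ihy =>
        refine ⟨fun α h => ?_, fun α h => ?_⟩
        · exact ihx.1 _ (ihy.1 _ h)
        · rw [mul_inv_rev]
          exact ihy.2 _ (ihx.2 _ h)
    | inv x hx ihx =>
        refine ⟨ihx.2, fun α h => ?_⟩
        rw [inv_inv]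
        exact ihx.1 α h
  exact main.1

/-- The type of roots. -/
def Root := {α : I → ℤ // IsRoot G α}

/-- The simple root `e_i` as an element of `Root`. -/
def simpleRoot (i : I) : Root G := ⟨Pi.single i 1, isRoot_single G i⟩

/-- Negation of a root. -/
def negRoot (α : Root G) : Root G := ⟨-α.1, isRoot_neg G α.2⟩

/-- The generator `s_i` as an element of the Weyl group. -/
def sGen (i : I) : ↥(Weyl G) := ⟨reflectEquiv G i, Subgroup.subset_closure ⟨i, rfl⟩⟩

/-- Action of a Weyl group element on roots. -/
def rootSmul (w : ↥(Weyl G)) (α : Root G) : Root G :=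
  ⟨(w : (I → ℤ) ≃ₗ[ℤ] (I → ℤ)) α.1, weyl_isRoot G w.2 α.1 α.2⟩

/-- The equivalence relation identifying a root `α` with `±α`. -/
def rootSetoid : Setoid (Root G) where
  r α β := α.1 = β.1 ∨ α.1 = -β.1
  iseqv := by
    refine ⟨fun α => Or.inl rfl, ?_, ?_⟩
    · rintro α β (h | h)
      · exact Or.inl h.symm
      · exact Or.inr (by rw [h, neg_neg])
    · rintro α β γ (h₁ | h₁) (h₂ | h₂)
      · exact Or.inl (h₁.trans h₂)
      · exact Or.inr (h₁.trans h₂)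
      · exact Or.inr (by rw [h₁, h₂])
      · exact Or.inl (by rw [h₁, h₂, neg_neg])

/-- `Φ/±`: the quotient of the set of roots by the involution `α ↦ -α`. -/
def RootMod := Quotient (rootSetoid G)

/-- The class of a root in `Φ/±`. -/
def rcls (α : Root G) : RootMod G := Quotient.mk (rootSetoid G) α

/-- The class `[e_i]` of a simple root in `Φ/±`. -/
def cls (i : I) : RootMod G := rcls G (simpleRoot G i)

/-- Action of a Weyl group element on `Φ/±`. -/
def rmodSmul (w : ↥(Weyl G)) : RootMod G → RootMod G :=
  Quotient.map (rootSmul G w) (by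
    rintro α β (h | h)
    · exact Or.inl (by simp [rootSmul, h])
    · exact Or.inr (by simp [rootSmul, h, map_neg]))

/-- The action of `w ∈ W` on `ℤΦ` (the free abelian group on the roots). -/
def wZPhi (w : ↥(Weyl G)) : (Root G →₀ ℤ) →+ (Root G →₀ ℤ) :=
  Finsupp.mapDomain.addMonoidHom (rootSmul G w)

/-- The action of `w ∈ W` on `ℤ[Φ/±]`. -/
def wZQ (w : ↥(Weyl G)) : (RootMod G →₀ ℤ) →+ (RootMod G →₀ ℤ) :=
  Finsupp.mapDomain.addMonoidHom (rmodSmul G w)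

/-- The canonical projection `π : ℤΦ → ℤ[Φ/±]`, `T_α ↦ t_{[α]}`. -/
def piHom : (Root G →₀ ℤ) →+ (RootMod G →₀ ℤ) :=
  Finsupp.mapDomain.addMonoidHom (rcls G)

/-- The action of `w ∈ W` on `ℚ ⊗ ℤΦ = (Φ →₀ ℚ)`. -/
def wZPhiQ (w : ↥(Weyl G)) : (Root G →₀ ℚ) →ₗ[ℚ] (Root G →₀ ℚ) :=
  Finsupp.lmapDomain ℚ ℚ (rootSmul G w)

/-- The action of `w ∈ W` on `ℚ ⊗ ℤ[Φ/±] = (Φ/± →₀ ℚ)`. -/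
def wZQQ (w : ↥(Weyl G)) : (RootMod G →₀ ℚ) →ₗ[ℚ] (RootMod G →₀ ℚ) :=
  Finsupp.lmapDomain ℚ ℚ (rmodSmul G w)

/-- The projection `ℚ ⊗ ℤΦ → ℚ ⊗ ℤ[Φ/±]`. -/
def piHomQ : (Root G →₀ ℚ) →ₗ[ℚ] (RootMod G →₀ ℚ) :=
  Finsupp.lmapDomain ℚ ℚ (rcls G)

/-- The subgroup `P̄ ⊂ ℤΦ` generated by the elements `T_α - T_{-α}`. -/
def Pbar : AddSubgroup (Root G →₀ ℤ) :=
  AddSubgroup.closure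
    {x | ∃ α : Root G, x = Finsupp.single α 1 - Finsupp.single (negRoot G α) 1}

end ADE


open ADE

variable {I : Type*} [Fintype I] [DecidableEq I]

section Aux

variable (G : SimpleGraph I) [DecidableRel G.Adj]

lemma cartan_offdiag_nonneg {i j : I} (h : i ≠ j) : 0 ≤ cartan G i j := by
  simp only [cartan, Matrix.of_apply, if_neg h]
  split <;> norm_num

lemma Bform_self_even (v : I → ℤ) : Even (Bform G v v) := by
  have hdvd : ((2:ℕ) : ℤ) ∣ Bform G v v := by
    rw [← ZMod.intCast_zmod_eq_zero_iff_dvd]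
    rw [Bform_apply]
    push_cast
    rw [← Finset.sum_product' (f := fun i j => ((v i : ZMod 2) * (cartan G i j : ZMod 2) * (v j : ZMod 2)))]
    rw [← Finset.diag_union_offDiag, Finset.sum_union (Finset.disjoint_diag_offDiag _)]
    have h1 : ∑ x ∈ Finset.univ.diag,
        ((v x.1 : ZMod 2) * (cartan G x.1 x.2 : ZMod 2) * (v x.2 : ZMod 2)) = 0 := by
      rw [Finset.sum_diag]
      apply Finset.sum_eq_zero
      intro i _
      rw [cartan_diag]
      have h0 : ((-2:ℤ) : ZMod 2) = 0 := by decide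
      rw [h0, mul_zero, zero_mul]
    have h2 : ∑ x ∈ Finset.univ.offDiag,
        ((v x.1 : ZMod 2) * (cartan G x.1 x.2 : ZMod 2) * (v x.2 : ZMod 2)) = 0 := by
      apply Finset.sum_involution (fun x _ => Prod.swap x)
      · intro a ha
        rw [cartan_symm]
        have : ((2 : ℤ) : ZMod 2) = 0 := by decide
        have h2 : (2 : ZMod 2) = 0 := by decide
        simp only [Prod.fst_swap, Prod.snd_swap]
        ring_nf
        rw [h2, mul_zero]
      · intro a ha _
        simp only [Finset.mem_offDiag] at ha
        intro hc
        exact ha.2.2 (congrArg Prod.fst hc).symm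
      · intro a ha
        simp only [Finset.mem_offDiag] at ha ⊢
        exact ⟨Finset.mem_univ _, Finset.mem_univ _, fun h => ha.2.2 h.symm⟩
      · intro a ha
        rfl
    rw [h1, h2, add_zero]
  obtain ⟨k, hk⟩ := hdvd
  exact ⟨k, by push_cast at hk; omega⟩

lemma Bform_self_neg (hneg : NegDef G) {v : I → ℤ} (hv : v ≠ 0) : Bform G v v < 0 := by
  have hvr : (fun i => (v i : ℝ)) ≠ 0 := by
    intro h
    apply hv
    funext i
    have := congrFun h i
    simpa using this
  have := hneg _ hvr
  have hcast : ((Bform G v v : ℤ) : ℝ) = ∑ i, ∑ j, (v i : ℝ) * (cartan G i j : ℝ) * (v j : ℝ) := by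
    rw [Bform_apply]
    push_cast
    rfl
  have : ((Bform G v v : ℤ) : ℝ) < 0 := by rw [hcast]; exact this
  exact_mod_cast this

lemma Bform_self_le (hneg : NegDef G) {v : I → ℤ} (hv : v ≠ 0) : Bform G v v ≤ -2 := by
  obtain ⟨k, hk⟩ := Bform_self_even G v
  have := Bform_self_neg G hneg hv
  omega

lemma Bform_pairing_nonneg {p n : I → ℤ} (hp : ∀ i, 0 ≤ p i) (hn : ∀ i, 0 ≤ n i)
    (hd : ∀ i, p i = 0 ∨ n i = 0) : 0 ≤ Bform G p n := by
  rw [Bform_apply]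
  apply Finset.sum_nonneg
  intro i _
  apply Finset.sum_nonneg
  intro j _
  rcases eq_or_ne i j with rfl | hij
  · rcases hd i with h | h <;> simp [h]
  · exact mul_nonneg (mul_nonneg (hp i) (cartan_offdiag_nonneg G hij)) (hn j)

end Aux

/-- every root has either all coordinates `≥ 0` or all coordinates `≤ 0`. -/
theorem root_coords_all_nonneg_or_all_nonpos (G : SimpleGraph I) [DecidableRel G.Adj]
    (hneg : NegDef G) (α : I → ℤ) (hα : IsRoot G α) :
    (∀ i : I, 0 ≤ α i) ∨ (∀ i : I, α i ≤ 0) := by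
  by_cases h1 : ∀ i : I, 0 ≤ α i
  · exact Or.inl h1
  by_cases h2 : ∀ i : I, α i ≤ 0
  · exact Or.inr h2
  exfalso
  push_neg at h1 h2
  obtain ⟨i0, hi0⟩ := h1
  obtain ⟨j0, hj0⟩ := h2
  set p : I → ℤ := fun i => max (α i) 0 with hp_def
  set n : I → ℤ := fun i => max (-α i) 0 with hn_def
  have hα' : α = p - n := by
    funext i
    simp only [hp_def, hn_def, Pi.sub_apply]
    omega
  have hp : ∀ i, 0 ≤ p i := fun i => le_max_right _ _
  have hn : ∀ i, 0 ≤ n i := fun i => le_max_right _ _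
  have hd : ∀ i, p i = 0 ∨ n i = 0 := by
    intro i
    simp only [hp_def, hn_def]
    omega
  have hpne : p ≠ 0 := by
    intro h
    have := congrFun h j0
    simp only [hp_def, Pi.zero_apply] at this
    omega
  have hnne : n ≠ 0 := by
    intro h
    have := congrFun h i0
    simp only [hn_def, Pi.zero_apply] at this
    omega
  have hexp : Bform G α α
      = Bform G p p - 2 * Bform G p n + Bform G n n := by
    rw [hα']
    have hc : Bform G n p = Bform G p n := Bform_comm G n p
    simp only [map_sub, LinearMap.sub_apply, hc]
    ring
  have h1 := Bform_self_le G hneg hpne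
  have h2 := Bform_self_le G hneg hnne
  have h3 := Bform_pairing_nonneg G hp hn hd
  unfold IsRoot at hα
  rw [hexp] at hα
  omega
end
end

section
/- The Weyl group W, i.e. the subgroup of the group of ℤ-linear automorphisms of ℤ^I generated by the reflections s_i (i ∈ I), is a finite group. -/
set_option linter.unusedSectionVars false

open Finset

noncomputable section

namespace ADE

variable {I : Type*} [Fintype I] [DecidableEq I]

variable (G : SimpleGraph I) [DecidableRel G.Adj]

lemma Qcont (G : SimpleGraph I) [DecidableRel G.Adj] :
    Continuous (fun v : I → ℝ => ∑ i, ∑ j, v i * (cartan G i j : ℝ) * v j) := by fun_prop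

lemma Qhomog (G : SimpleGraph I) [DecidableRel G.Adj] (t : ℝ) (v : I → ℝ) :
    (∑ i, ∑ j, (t • v) i * (cartan G i j : ℝ) * (t • v) j)
      = t ^ 2 * ∑ i, ∑ j, v i * (cartan G i j : ℝ) * v j := by
  rw [Finset.mul_sum]
  refine Finset.sum_congr rfl fun i _ => ?_
  rw [Finset.mul_sum]
  refine Finset.sum_congr rfl fun j _ => ?_
  simp only [Pi.smul_apply, smul_eq_mul]
  ring

lemma exists_bound (G : SimpleGraph I) [DecidableRel G.Adj] [Nonempty I] (hneg : NegDef G) :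
    ∃ c : ℝ, 0 < c ∧ ∀ v : I → ℝ,
      (∑ i, ∑ j, v i * (cartan G i j : ℝ) * v j) ≤ -c * ‖v‖ ^ 2 := by
  set Q : (I → ℝ) → ℝ := fun v => ∑ i, ∑ j, v i * (cartan G i j : ℝ) * v j with hQ
  have hS : IsCompact (Metric.sphere (0 : I → ℝ) 1) := isCompact_sphere 0 1
  have hSne : (Metric.sphere (0 : I → ℝ) 1).Nonempty := by
    obtain ⟨i⟩ := (inferInstance : Nonempty I)
    exact ⟨Pi.single i 1, by simp [Pi.norm_single]⟩
  obtain ⟨x, hxS, hmax⟩ := hS.exists_isMaxOn hSne (Qcont G).continuousOn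
  have hx1 : ‖x‖ = 1 := by simpa using hxS
  have hxne : x ≠ 0 := fun h => by simp [h] at hx1
  refine ⟨-Q x, by simpa using hneg x hxne, fun v => ?_⟩
  rcases eq_or_ne v 0 with rfl | hv
  · simp [hQ]
  · have hnv : (0:ℝ) < ‖v‖ := norm_pos_iff.mpr hv
    have hu : (‖v‖⁻¹ • v) ∈ Metric.sphere (0 : I → ℝ) 1 := by
      simp [norm_smul, abs_of_pos (inv_pos.mpr hnv), inv_mul_cancel₀ hnv.ne']
    have h1 : Q (‖v‖⁻¹ • v) ≤ Q x := hmax hu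
    have h2 : Q (‖v‖⁻¹ • v) = (‖v‖⁻¹) ^ 2 * Q v := Qhomog G _ v
    have hle : (‖v‖⁻¹) ^ 2 * Q v ≤ Q x := h2 ▸ h1
    calc Q v = ‖v‖ ^ 2 * ((‖v‖⁻¹) ^ 2 * Q v) := by
          field_simp
      _ ≤ ‖v‖ ^ 2 * Q x := mul_le_mul_of_nonneg_left hle (by positivity)
      _ = -(-Q x) * ‖v‖ ^ 2 := by ring

lemma root_finite (G : SimpleGraph I) [DecidableRel G.Adj] (hneg : NegDef G) :
    {α : I → ℤ | IsRoot G α}.Finite := by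
  rcases isEmpty_or_nonempty I with hI | hI
  · refine Set.Finite.subset (Set.finite_singleton (0 : I → ℤ)) ?_
    intro α _
    simp only [Set.mem_singleton_iff]
    funext i; exact isEmptyElim i
  · obtain ⟨c, hc, hbound⟩ := exists_bound G hneg
    set N : ℕ := ⌈Real.sqrt (2 / c)⌉₊ with hN
    refine Set.Finite.subset (Finset.finite_toSet
      (Fintype.piFinset fun _ : I => Finset.Icc (-(N:ℤ)) (N:ℤ))) ?_
    intro α hα
    have hz : (∑ i, ∑ j, α i * cartan G i j * α j : ℤ) = -2 := by
      have := hα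
      simpa [IsRoot, Bform_apply G] using this
    have hroot : (∑ i, ∑ j, (α i : ℝ) * (cartan G i j : ℝ) * (α j : ℝ)) = -2 := by
      exact_mod_cast hz
    set v : I → ℝ := fun i => (α i : ℝ) with hv
    have h1 : (-2 : ℝ) ≤ -c * ‖v‖ ^ 2 := hroot ▸ hbound v
    have h2 : ‖v‖ ^ 2 ≤ 2 / c := by
      rw [le_div_iff₀ hc]
      nlinarith
    have h3 : ‖v‖ ≤ Real.sqrt (2 / c) := by
      rw [← Real.sqrt_sq (norm_nonneg v)]
      exact Real.sqrt_le_sqrt h2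
    have h4 : ∀ i, |α i| ≤ (N : ℤ) := by
      intro i
      have hvi : |v i| ≤ ‖v‖ := by simpa using norm_le_pi_norm v i
      have : (|α i| : ℝ) ≤ (N : ℝ) := by
        calc (|α i| : ℝ) = |v i| := by simp [hv]
          _ ≤ ‖v‖ := hvi
          _ ≤ Real.sqrt (2 / c) := h3
          _ ≤ (N : ℝ) := Nat.le_ceil _
      exact_mod_cast this
    simp only [Finset.coe_sort_coe, Finset.mem_coe, Fintype.mem_piFinset, Finset.mem_Icc]
    intro i
    exact abs_le.mp (h4 i)

end ADE


open ADE

variable {I : Type*} [Fintype I] [DecidableEq I]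

/-- the Weyl group `W` is finite. -/
theorem weyl_group_finite (G : SimpleGraph I) [DecidableRel G.Adj] (hneg : NegDef G) :
    (Weyl G : Set ((I → ℤ) ≃ₗ[ℤ] (I → ℤ))).Finite := by
  have hfin : {α : I → ℤ | IsRoot G α}.Finite := root_finite G hneg
  have : Finite (Root G) := hfin.to_subtype
  rw [← Set.finite_coe_iff]
  refine Finite.of_injective (fun w : ↥(Weyl G) => fun i => rootSmul G w (simpleRoot G i)) ?_
  intro w₁ w₂ h
  have key : ∀ i : I, (w₁ : (I → ℤ) ≃ₗ[ℤ] (I → ℤ)) (Pi.single i 1)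
      = (w₂ : (I → ℤ) ≃ₗ[ℤ] (I → ℤ)) (Pi.single i 1) := by
    intro i
    have := congrFun h i
    exact congrArg Subtype.val this
  apply Subtype.ext
  apply LinearEquiv.toLinearMap_injective
  apply Module.Basis.ext (Pi.basisFun ℤ I)
  intro i
  simpa [Pi.basisFun_apply] using key i
end
end

section
/- Assume Γ is connected. Let A be an abelian group equipped with an action of W by additive automorphisms, and let a_i ∈ A (i ∈ I) be elements such that s_i · a_j = a_j whenever i and j are not joined by an edge of Γ (in particular whenever i = j), and s_i · a_j = s_j · a_i whenever i and j are joined by an edge. Then there exists a unique W-equivariant group homomorphism f : ℤ[Φ/±] → A with f(t_{[e_i]}) = a_i for all i ∈ I. -/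
set_option linter.unusedSectionVars false

open Finset

noncomputable section

open ADE

variable {I : Type*} [Fintype I] [DecidableEq I]

namespace ADEAux
open ADE

variable {I : Type*} [Fintype I] [DecidableEq I] (G : SimpleGraph I) [DecidableRel G.Adj]

abbrev eps (i : I) : I → ℤ := Pi.single i 1

lemma single_eq_smul (i : I) (c : ℤ) : Pi.single i c = c • (eps i) := by
  rw [eps, ← Pi.single_smul]; norm_num

lemma eq_sum_smul_eps (v : I → ℤ) : v = ∑ i, (v i) • (eps i) := by
  conv_lhs => rw [← Finset.univ_sum_single v]
  exact Finset.sum_congr rfl fun i _ => single_eq_smul i (v i)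

lemma eps_inj {i j : I} (h : (eps i : I → ℤ) = eps j) : i = j := by
  by_contra hij
  have := congrFun h i
  simp [Pi.single_apply, hij] at this

lemma cartan_offdiag_nonneg {i j : I} (h : i ≠ j) : 0 ≤ cartan G i j := by
  by_cases hadj : G.Adj i j <;> simp [cartan, Matrix.of_apply, h, hadj]

lemma cartan_le_one_of_ne {i j : I} (h : i ≠ j) : cartan G i j ≤ 1 := by
  by_cases hadj : G.Adj i j <;> simp [cartan, Matrix.of_apply, h, hadj]

lemma cartan_eq_one_iff {i j : I} (h : i ≠ j) : cartan G i j = 1 ↔ G.Adj i j := by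
  by_cases hadj : G.Adj i j <;> simp [cartan, Matrix.of_apply, h, hadj]

lemma Bform_add_left (x y w : I → ℤ) : Bform G (x + y) w = Bform G x w + Bform G y w := by
  simp [map_add]

lemma Bform_smul_left (c : ℤ) (x w : I → ℤ) : Bform G (c • x) w = c * Bform G x w := by
  rw [map_smul, LinearMap.smul_apply, smul_eq_mul]

lemma Bform_add_right (x y w : I → ℤ) : Bform G w (x + y) = Bform G w x + Bform G w y := by
  simp [map_add]

lemma Bform_smul_right (c : ℤ) (x w : I → ℤ) : Bform G w (c • x) = c * Bform G w x := by
  rw [map_smul, smul_eq_mul]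

lemma Bform_self_neg (hneg : NegDef G) {v : I → ℤ} (hv : v ≠ 0) : Bform G v v < 0 := by
  have hv' : (fun i => (v i : ℝ)) ≠ 0 := by
    intro h
    apply hv
    funext i
    have h2 : (v i : ℝ) = 0 := by simpa using congrFun h i
    exact_mod_cast h2
  have h2 := hneg _ hv'
  have hcast : ((Bform G v v : ℤ) : ℝ)
      = ∑ i, ∑ j, ((v i : ℝ)) * ((cartan G i j : ℤ) : ℝ) * ((v j : ℝ)) := by
    rw [Bform_apply]; push_cast; rfl
  have : ((Bform G v v : ℤ) : ℝ) < 0 := by rw [hcast]; exact h2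
  exact_mod_cast this

lemma Bform_self_nonpos (hneg : NegDef G) (v : I → ℤ) : Bform G v v ≤ 0 := by
  rcases eq_or_ne v 0 with rfl | hv
  · simp
  · exact le_of_lt (Bform_self_neg G hneg hv)

lemma eq_zero_of_Bform_self_eq_zero (hneg : NegDef G) {v : I → ℤ} (h : Bform G v v = 0) :
    v = 0 := by
  by_contra hv
  exact absurd h (ne_of_lt (Bform_self_neg G hneg hv))

lemma even_double_sum {ι : Type*} [DecidableEq ι] (s : Finset ι) (f : ι → ι → ℤ)
    (hsymm : ∀ i j, f i j = f j i) (hdiag : ∀ i, Even (f i i)) :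
    Even (∑ i ∈ s, ∑ j ∈ s, f i j) := by
  classical
  induction s using Finset.induction_on with
  | empty => simp
  | @insert a s ha ih =>
      have expand : ∑ i ∈ insert a s, ∑ j ∈ insert a s, f i j
          = f a a + (∑ j ∈ s, f a j + ∑ i ∈ s, f i a) + ∑ i ∈ s, ∑ j ∈ s, f i j := by
        rw [Finset.sum_insert ha, Finset.sum_insert ha]
        have : ∑ i ∈ s, ∑ j ∈ insert a s, f i j
            = ∑ i ∈ s, f i a + ∑ i ∈ s, ∑ j ∈ s, f i j := by
          rw [← Finset.sum_add_distrib]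
          exact Finset.sum_congr rfl fun i _ => Finset.sum_insert ha
        rw [this]; ring
      rw [expand]
      have h1 : ∑ i ∈ s, f i a = ∑ j ∈ s, f a j :=
        Finset.sum_congr rfl fun i _ => hsymm i a
      rw [h1]
      exact ((hdiag a).add ⟨∑ j ∈ s, f a j, by ring⟩).add ih

lemma Bform_self_even (v : I → ℤ) : Even (Bform G v v) := by
  rw [Bform_apply]
  refine even_double_sum _ _ (fun i j => by rw [cartan_symm]; ring) (fun i => ?_)
  rw [cartan_diag]
  exact ⟨-(v i * v i), by ring⟩

lemma Bform_self_le_neg_two (hneg : NegDef G) {v : I → ℤ} (hv : v ≠ 0) :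
    Bform G v v ≤ -2 := by
  have h1 := Bform_self_neg G hneg hv
  obtain ⟨m, hm⟩ := Bform_self_even G v
  omega



variable {G}

section PosFacts
variable (hneg : NegDef G)

/-- positivity of a vector -/
def IsPos (v : I → ℤ) : Prop := ∀ i, 0 ≤ v i

/-- height -/
def ht (v : I → ℤ) : ℤ := ∑ i, v i

lemma ht_add (v w : I → ℤ) : ht (v + w) = ht v + ht w := by
  simp [ht, Finset.sum_add_distrib]

lemma ht_smul (c : ℤ) (v : I → ℤ) : ht (c • v) = c * ht v := by
  simp [ht, Finset.mul_sum]

lemma ht_eps (i : I) : ht (eps i : I → ℤ) = 1 := by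
  simp [ht]

lemma root_ne_zero {α : I → ℤ} (h : IsRoot G α) : α ≠ 0 := by
  intro h0
  rw [IsRoot, h0] at h
  simp at h

include hneg

lemma isPos_or_isPos_neg {α : I → ℤ} (h : IsRoot G α) : IsPos α ∨ IsPos (-α) := by
  by_contra hcon
  push_neg at hcon
  obtain ⟨h1, h2⟩ := hcon
  rw [IsPos] at h1 h2
  push_neg at h1 h2
  obtain ⟨i0, hi0⟩ := h1
  obtain ⟨j0, hj0⟩ := h2
  rw [Pi.neg_apply] at hj0
  set p : I → ℤ := fun i => max (α i) 0 with hp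
  set q : I → ℤ := fun i => max (-α i) 0 with hq
  have hpq : α = p - q := by
    funext i
    simp only [hp, hq, Pi.sub_apply]
    omega
  have hppos : p ≠ 0 := by
    intro h0
    have := congrFun h0 j0
    simp only [hp, Pi.zero_apply] at this
    omega
  have hqpos : q ≠ 0 := by
    intro h0
    have := congrFun h0 i0
    simp only [hq, Pi.zero_apply] at this
    omega
  have hBpq : 0 ≤ Bform G p q := by
    rw [Bform_apply]
    refine Finset.sum_nonneg fun i _ => Finset.sum_nonneg fun j _ => ?_
    rcases eq_or_ne i j with rfl | hij
    · have hz : p i * q i = 0 := by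
        simp only [hp, hq]
        rcases le_total (α i) 0 with h | h
        · have h0 : α i ⊔ 0 = 0 := by omega
          rw [h0]; ring
        · have h0 : -α i ⊔ 0 = 0 := by omega
          rw [h0]; ring
      have hre : p i * cartan G i i * q i = cartan G i i * (p i * q i) := by ring
      rw [hre, hz, mul_zero]
    · have h3 := cartan_offdiag_nonneg G hij
      have h4 : 0 ≤ p i := by simp [hp]
      have h5 : 0 ≤ q j := by simp [hq]
      positivity
  have hBp := Bform_self_le_neg_two G hneg hppos
  have hBq := Bform_self_le_neg_two G hneg hqpos
  have hBpq' : Bform G q p = Bform G p q := Bform_comm G q p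
  have hexp : Bform G α α = Bform G p p + Bform G q q - 2 * Bform G p q := by
    rw [hpq]
    have hsub : p - q = p + (-1 : ℤ) • q := by funext i; simp [sub_eq_add_neg]
    rw [hsub, Bform_add_left, Bform_add_right, Bform_add_right, Bform_smul_left,
      Bform_smul_left, Bform_smul_right, Bform_smul_right, hBpq']
    ring
  rw [IsRoot] at h
  omega

lemma B_root_eps_ge {α : I → ℤ} (h : IsRoot G α) (i : I) :
    -2 ≤ Bform G α (eps i) := by
  have hle := Bform_self_nonpos G hneg (α - eps i)
  have hexp : Bform G (α - eps i) (α - eps i)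
      = -4 - 2 * Bform G α (eps i) := by
    have h1 : α - eps i = α + (-1 : ℤ) • (eps i) := by funext j; simp [sub_eq_add_neg]
    rw [h1, Bform_add_left, Bform_add_right, Bform_add_right, Bform_smul_left,
      Bform_smul_left, Bform_smul_right, Bform_smul_right, Bform_single_self,
      Bform_comm G (eps i) α, h]
    ring
  omega

lemma eq_eps_of_B_eq_neg_two {α : I → ℤ} (h : IsRoot G α) (i : I)
    (hB : Bform G α (eps i) = -2) : α = eps i := by
  have hexp : Bform G (α - eps i) (α - eps i)
      = -4 - 2 * Bform G α (eps i) := by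
    have h1 : α - eps i = α + (-1 : ℤ) • (eps i) := by funext j; simp [sub_eq_add_neg]
    rw [h1, Bform_add_left, Bform_add_right, Bform_add_right, Bform_smul_left,
      Bform_smul_left, Bform_smul_right, Bform_smul_right, Bform_single_self,
      Bform_comm G (eps i) α, h]
    ring
  have h0 : Bform G (α - eps i) (α - eps i) = 0 := by rw [hexp, hB]; ring
  have h2 : α - eps i = 0 := eq_zero_of_Bform_self_eq_zero G hneg h0
  funext j
  have := congrFun h2 j
  simp only [Pi.sub_apply, Pi.zero_apply] at this
  omega

lemma B_root_eps_le {α : I → ℤ} (h : IsRoot G α) (i : I) :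
    Bform G α (eps i) ≤ 2 := by
  have hle := Bform_self_nonpos G hneg (α + eps i)
  have hexp : Bform G (α + eps i) (α + eps i)
      = -4 + 2 * Bform G α (eps i) := by
    rw [Bform_add_left, Bform_add_right, Bform_add_right, Bform_single_self,
      Bform_comm G (eps i) α, h]
    ring
  omega

end PosFacts

lemma sum_coord_mul_B (α : I → ℤ) :
    ∑ i, α i * Bform G α (eps i) = Bform G α α := by
  have h1 : Bform G α (∑ i, α i • eps i) = ∑ i, α i * Bform G α (eps i) := by
    rw [map_sum]
    exact Finset.sum_congr rfl fun i _ => Bform_smul_right G _ _ _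
  rw [← h1, ← eq_sum_smul_eps α]

lemma exists_B_neg {α : I → ℤ} (h : IsRoot G α) (hpos : IsPos α) :
    ∃ k, Bform G α (eps k) < 0 := by
  by_contra hcon
  push_neg at hcon
  have hsum : (0 : ℤ) ≤ ∑ i, α i * Bform G α (eps i) :=
    Finset.sum_nonneg fun i _ => mul_nonneg (hpos i) (hcon i)
  rw [sum_coord_mul_B, h] at hsum
  omega

lemma ht_reflect (i : I) (α : I → ℤ) :
    ht (reflect G i α) = ht α + Bform G α (eps i) := by
  rw [reflect, ht_add, ht_smul, ht_eps, mul_one]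

lemma ht_pos_of_isPos {α : I → ℤ} (h : IsRoot G α) (hpos : IsPos α) : 1 ≤ ht α := by
  have hne := root_ne_zero h
  have : ∃ i, α i ≠ 0 := by
    by_contra hc
    push_neg at hc
    exact hne (funext fun i => hc i)
  obtain ⟨i, hi⟩ := this
  have h1 : 1 ≤ α i := by have := hpos i; omega
  calc (1 : ℤ) ≤ α i := h1
    _ ≤ ∑ j, α j := Finset.single_le_sum (fun j _ => hpos j) (Finset.mem_univ i)

lemma eq_eps_of_ht_one {α : I → ℤ} (hpos : IsPos α) (hht : ht α = 1) :
    ∃ j, α = eps j := by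
  have hex : ∃ j, 0 < α j := by
    by_contra hc
    push_neg at hc
    have : ht α ≤ 0 := Finset.sum_nonpos fun j _ => hc j
    omega
  obtain ⟨j, hj⟩ := hex
  refine ⟨j, funext fun m => ?_⟩
  have hsplit : ht α = α j + ∑ m ∈ Finset.univ.erase j, α m := by
    rw [ht, ← Finset.add_sum_erase _ _ (Finset.mem_univ j)]
  have herase : 0 ≤ ∑ m ∈ Finset.univ.erase j, α m :=
    Finset.sum_nonneg fun m _ => hpos m
  have hαj : α j = 1 := by omega
  rcases eq_or_ne m j with rfl | hm
  · simp [hαj, Pi.single_apply]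
  · have hmem : m ∈ Finset.univ.erase j := Finset.mem_erase.2 ⟨hm, Finset.mem_univ m⟩
    have hle : α m ≤ ∑ x ∈ Finset.univ.erase j, α x :=
      Finset.single_le_sum (fun x _ => hpos x) hmem
    have := hpos m
    have : α m = 0 := by omega
    simp [this, Pi.single_apply, hm]

lemma reflect_coord_ne (i : I) (α : I → ℤ) {j : I} (hj : j ≠ i) :
    reflect G i α j = α j := by
  simp [reflect, Pi.single_apply, hj]

lemma eq_eps_of_reflect_not_pos (hneg : NegDef G) {α : I → ℤ} (h : IsRoot G α)
    (hpos : IsPos α) {i : I} (hnp : ¬ IsPos (reflect G i α)) : α = eps i := by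
  have hr : IsRoot G (reflect G i α) := isRoot_reflect G i h
  rcases isPos_or_isPos_neg hneg hr with hp | hp
  · exact absurd hp hnp
  · have hcoord : ∀ j, j ≠ i → α j = 0 := by
      intro j hj
      have h1 := hp j
      rw [Pi.neg_apply, reflect_coord_ne i α hj] at h1
      have := hpos j
      omega
    have hform : α = Pi.single i (α i) := by
      funext j
      rcases eq_or_ne j i with rfl | hj
      · simp
      · rw [hcoord j hj, Pi.single_apply]
        simp [hj]
    have hroot2 : Bform G α α = -2 := h
    rw [hform, single_eq_smul, Bform_smul_left, Bform_smul_right, Bform_single_self] at hroot2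
    have hsq : α i * α i = 1 := by
      ring_nf at hroot2 ⊢
      linarith
    have hnn := hpos i
    have hle1 : α i ≤ 1 := by nlinarith
    have hge1 : 1 ≤ α i := by nlinarith
    have heq1 : α i = 1 := by omega
    rw [hform, heq1]

lemma reflect_eq_of_B_zero {i : I} {v : I → ℤ} (h : Bform G v (eps i) = 0) :
    reflect G i v = v := by
  rw [reflect, h, zero_smul, add_zero]

lemma reflect_comm {i k : I} (h : Bform G (eps i) (eps k) = 0) (v : I → ℤ) :
    reflect G i (reflect G k v) = reflect G k (reflect G i v) := by
  have hki : Bform G (eps k) (eps i) = 0 := by rw [Bform_comm]; exact h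
  simp only [reflect, Bform_add_left, Bform_smul_left, h, hki, mul_zero, add_zero]
  abel

lemma reflect_braid {i k : I} (h : Bform G (eps i) (eps k) = 1) (v : I → ℤ) :
    reflect G i (reflect G k (reflect G i v)) = reflect G k (reflect G i (reflect G k v)) := by
  have hki : Bform G (eps k) (eps i) = 1 := by rw [Bform_comm]; exact h
  simp only [reflect, Bform_add_left, Bform_smul_left, h, hki, Bform_single_self,
    mul_one, mul_neg]
  module

lemma weyl_coe_mul (w w' : ↥(Weyl G)) (v : I → ℤ) :
    ((w * w' : ↥(Weyl G)) : (I → ℤ) ≃ₗ[ℤ] (I → ℤ)) v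
      = (w : (I → ℤ) ≃ₗ[ℤ] (I → ℤ)) ((w' : (I → ℤ) ≃ₗ[ℤ] (I → ℤ)) v) := rfl

lemma sGen_apply (i : I) (v : I → ℤ) :
    ((sGen G i : ↥(Weyl G)) : (I → ℤ) ≃ₗ[ℤ] (I → ℤ)) v = reflect G i v :=
  reflectEquiv_apply G i v

lemma sGen_sq (i : I) : sGen G i * sGen G i = 1 := by
  apply Subtype.ext
  apply LinearEquiv.toLinearMap_injective
  apply LinearMap.ext
  intro v
  show ((sGen G i * sGen G i : ↥(Weyl G)) : (I → ℤ) ≃ₗ[ℤ] (I → ℤ)) v = v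
  rw [weyl_coe_mul, sGen_apply, sGen_apply]
  exact reflect_reflect G i v

lemma sGen_comm {i k : I} (h : Bform G (eps i) (eps k) = 0) :
    sGen G i * sGen G k = sGen G k * sGen G i := by
  apply Subtype.ext
  apply LinearEquiv.toLinearMap_injective
  apply LinearMap.ext
  intro v
  show ((sGen G i * sGen G k : ↥(Weyl G)) : (I → ℤ) ≃ₗ[ℤ] (I → ℤ)) v
    = ((sGen G k * sGen G i : ↥(Weyl G)) : (I → ℤ) ≃ₗ[ℤ] (I → ℤ)) v
  rw [weyl_coe_mul, weyl_coe_mul, sGen_apply, sGen_apply, sGen_apply, sGen_apply]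
  exact reflect_comm h v

lemma sGen_braid {i k : I} (h : Bform G (eps i) (eps k) = 1) :
    sGen G i * sGen G k * sGen G i = sGen G k * sGen G i * sGen G k := by
  apply Subtype.ext
  apply LinearEquiv.toLinearMap_injective
  apply LinearMap.ext
  intro v
  show ((sGen G i * sGen G k * sGen G i : ↥(Weyl G)) : (I → ℤ) ≃ₗ[ℤ] (I → ℤ)) v
    = ((sGen G k * sGen G i * sGen G k : ↥(Weyl G)) : (I → ℤ) ≃ₗ[ℤ] (I → ℤ)) v
  rw [weyl_coe_mul, weyl_coe_mul, weyl_coe_mul, weyl_coe_mul]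
  simp only [sGen_apply]
  exact reflect_braid h v

instance multAddAutCoeFun {A : Type*} [AddCommGroup A] :
    CoeFun (Multiplicative (AddAut A)) (fun _ => A → A) :=
  ⟨fun f => ⇑(Multiplicative.toAdd f)⟩

section Rho
variable {A : Type*} [AddCommGroup A] (ρ : ↥(Weyl G) →* Multiplicative (AddAut A))

lemma rho_mul_apply (w w' : ↥(Weyl G)) (x : A) :
    ρ (w * w') x = ρ w (ρ w' x) := by
  rw [map_mul]; rfl

lemma rho_sq (i : I) (x : A) : ρ (sGen G i) (ρ (sGen G i) x) = x := by
  rw [← rho_mul_apply, sGen_sq, map_one]; rfl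

lemma rho_comm {i k : I} (h : Bform G (eps i) (eps k) = 0) (x : A) :
    ρ (sGen G i) (ρ (sGen G k) x) = ρ (sGen G k) (ρ (sGen G i) x) := by
  rw [← rho_mul_apply, ← rho_mul_apply, sGen_comm h]

lemma rho_braid {i k : I} (h : Bform G (eps i) (eps k) = 1) (x : A) :
    ρ (sGen G i) (ρ (sGen G k) (ρ (sGen G i) x))
      = ρ (sGen G k) (ρ (sGen G i) (ρ (sGen G k) x)) := by
  rw [← rho_mul_apply, ← rho_mul_apply, ← rho_mul_apply, ← rho_mul_apply,
    sGen_braid h]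

end Rho

lemma Bform_reflect_left (k : I) (α w : I → ℤ) :
    Bform G (reflect G k α) w
      = Bform G α w + Bform G α (eps k) * Bform G (eps k) w := by
  rw [reflect, Bform_add_left, Bform_smul_left]

section Construction
variable {A : Type*} [AddCommGroup A] (ρ : ↥(Weyl G) →* Multiplicative (AddAut A)) (a : I → A)

/-- fueled recursion defining the map on positive roots -/
def Faux : ℕ → (I → ℤ) → A
  | 0, _ => 0
  | n + 1, α =>
      if h : ∃ j : I, α = eps j then a h.choose
      else if h2 : ∃ k : I, Bform G α (eps k) < 0 then
        ρ (sGen G h2.choose) (Faux n (reflect G h2.choose α))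
      else 0

/-- the map on positive roots -/
def F (α : I → ℤ) : A := Faux ρ a (ht α).toNat α

lemma Faux_succ_simple (n : ℕ) {α : I → ℤ} (h : ∃ j : I, α = eps j) :
    Faux ρ a (n + 1) α = a h.choose := by
  rw [Faux, dif_pos h]

lemma Faux_succ_step (n : ℕ) {α : I → ℤ} (h : ¬ ∃ j : I, α = eps j)
    (h2 : ∃ k : I, Bform G α (eps k) < 0) :
    Faux ρ a (n + 1) α = ρ (sGen G h2.choose) (Faux ρ a n (reflect G h2.choose α)) := by
  rw [Faux, dif_neg h, dif_pos h2]

lemma choose_eps {α : I → ℤ} (h : ∃ j : I, α = eps j) {j : I} (hj : α = eps j) :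
    h.choose = j := by
  have hs := h.choose_spec
  exact (eps_inj (hj.symm.trans hs).symm)

variable (hneg : NegDef G)
include hneg

lemma ht_reflect_choose {α : I → ℤ} (hroot : IsRoot G α) (hpos : IsPos α)
    (h2 : ∃ k : I, Bform G α (eps k) < 0) :
    ht (reflect G h2.choose α) < ht α := by
  have hk := h2.choose_spec
  rw [ht_reflect]
  omega

lemma reflect_choose_pos {α : I → ℤ} (hroot : IsRoot G α) (hpos : IsPos α)
    (hns : ¬ ∃ j : I, α = eps j) (h2 : ∃ k : I, Bform G α (eps k) < 0) :
    IsPos (reflect G h2.choose α) := by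
  by_contra hnp
  exact hns ⟨h2.choose, eq_eps_of_reflect_not_pos hneg hroot hpos hnp⟩

lemma Faux_succ_eq (n : ℕ) : ∀ α : I → ℤ, IsRoot G α → IsPos α → (ht α).toNat ≤ n →
    Faux ρ a (n + 1) α = Faux ρ a n α := by
  induction n with
  | zero =>
      intro α hroot hpos hht
      have := ht_pos_of_isPos hroot hpos
      omega
  | succ n ih =>
      intro α hroot hpos hht
      by_cases h : ∃ j : I, α = eps j
      · rw [Faux_succ_simple ρ a _ h, Faux_succ_simple ρ a _ h]
      · have h2 : ∃ k : I, Bform G α (eps k) < 0 := exists_B_neg hroot hpos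
        rw [Faux_succ_step ρ a _ h h2, Faux_succ_step ρ a _ h h2]
        congr 1
        have hrpos := reflect_choose_pos hneg hroot hpos h h2
        have hrroot : IsRoot G (reflect G h2.choose α) := isRoot_reflect G _ hroot
        have hht2 := ht_reflect_choose hneg hroot hpos h2
        have h1 := ht_pos_of_isPos hrroot hrpos
        exact ih _ hrroot hrpos (by omega)

lemma Faux_eq_F (n : ℕ) : ∀ α : I → ℤ, IsRoot G α → IsPos α → (ht α).toNat ≤ n →
    Faux ρ a n α = F ρ a α := by
  induction n with
  | zero =>
      intro α hroot hpos hht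
      have := ht_pos_of_isPos hroot hpos
      omega
  | succ n ih =>
      intro α hroot hpos hht
      rcases Nat.lt_or_ge (ht α).toNat (n + 1) with h | h
      · rw [Faux_succ_eq ρ a hneg n α hroot hpos (by omega)]
        exact ih α hroot hpos (by omega)
      · have heq : (ht α).toNat = n + 1 := by omega
        rw [F, heq]

omit hneg in
lemma F_simple (j : I) : F ρ a (eps j) = a j := by
  have h1 : (ht (eps j : I → ℤ)).toNat = 1 := by rw [ht_eps]; rfl
  rw [F, h1]
  have h : ∃ j' : I, (eps j : I → ℤ) = eps j' := ⟨j, rfl⟩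
  rw [Faux_succ_simple ρ a 0 h, choose_eps h rfl]

lemma F_step {α : I → ℤ} (hroot : IsRoot G α) (hpos : IsPos α)
    (hns : ¬ ∃ j : I, α = eps j) (h2 : ∃ k : I, Bform G α (eps k) < 0) :
    F ρ a α = ρ (sGen G h2.choose) (F ρ a (reflect G h2.choose α)) := by
  have hh1 := ht_pos_of_isPos hroot hpos
  have hrpos := reflect_choose_pos hneg hroot hpos hns h2
  have hrroot : IsRoot G (reflect G h2.choose α) := isRoot_reflect G _ hroot
  have hht2 := ht_reflect_choose hneg hroot hpos h2
  have hh2 := ht_pos_of_isPos hrroot hrpos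
  obtain ⟨m, hm⟩ : ∃ m : ℕ, (ht α).toNat = m + 1 := ⟨(ht α).toNat - 1, by omega⟩
  rw [F, hm, Faux_succ_step ρ a m hns h2]
  congr 1
  exact Faux_eq_F ρ a hneg m _ hrroot hrpos (by omega)

end Construction

section Claim
variable {A : Type*} [AddCommGroup A] (ρ : ↥(Weyl G) →* Multiplicative (AddAut A)) (a : I → A)
variable (hneg : NegDef G)
variable (hnonadj : ∀ i j : I, ¬ G.Adj i j → ρ (sGen G i) (a j) = a j)
variable (hadj : ∀ i j : I, G.Adj i j → ρ (sGen G i) (a j) = ρ (sGen G j) (a i))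

include hneg hnonadj hadj

lemma claim : ∀ n : ℕ, ∀ α : I → ℤ, IsRoot G α → IsPos α → (ht α).toNat = n →
    ∀ i : I, Bform G α (eps i) ≤ 0 → IsPos (reflect G i α) →
    F ρ a (reflect G i α) = ρ (sGen G i) (F ρ a α) := by
  intro n
  induction n using Nat.strong_induction_on with
  | _ n IH =>
  intro α hroot hpos hn i hBi hposr
  have hht1 := ht_pos_of_isPos hroot hpos
  by_cases hns : ∃ j : I, α = eps j
  · -- simple root case
    obtain ⟨j, rfl⟩ := hns
    rcases eq_or_ne i j with rfl | hij
    · -- i = j : reflect G i (eps i) = -(eps i), not positive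
      exfalso
      have hval : reflect G i (eps i : I → ℤ) i = -1 := by
        rw [reflect, Bform_single_self]
        simp [Pi.single_apply]
      have := hposr i
      omega
    · -- i ≠ j : necessarily non-adjacent
      have hji : j ≠ i := fun h => hij h.symm
      have hc : Bform G (eps j) (eps i) = cartan G j i := Bform_single G j i
      have hc0 : cartan G j i = 0 := by
        have h1 := cartan_offdiag_nonneg G hji
        omega
      have hnadj : ¬ G.Adj i j := by
        intro hA
        have := (cartan_eq_one_iff G hji).2 hA.symm
        omega
      have hre : reflect G i (eps j : I → ℤ) = eps j :=
        reflect_eq_of_B_zero (by rw [hc, hc0])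
      rw [hre, F_simple]
      exact (hnonadj i j hnadj).symm
  · -- non-simple case
    have h2 : ∃ k : I, Bform G α (eps k) < 0 := exists_B_neg hroot hpos
    set k := h2.choose with hkdef
    have hk : Bform G α (eps k) < 0 := h2.choose_spec
    have hk1 : Bform G α (eps k) = -1 := by
      have hge := B_root_eps_ge hneg hroot k
      rcases (by omega : Bform G α (eps k) = -1 ∨ Bform G α (eps k) = -2) with h | h
      · exact h
      · exact absurd ⟨k, eq_eps_of_B_eq_neg_two hneg hroot k h⟩ hns
    set β := reflect G k α with hβdef
    have hstep : F ρ a α = ρ (sGen G k) (F ρ a β) := F_step ρ a hneg hroot hpos hns h2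
    have hβroot : IsRoot G β := isRoot_reflect G k hroot
    have hβpos : IsPos β := reflect_choose_pos hneg hroot hpos hns h2
    have htβ : ht β = ht α - 1 := by rw [hβdef, ht_reflect, hk1]; ring
    have hht2 : 2 ≤ ht α := by
      rcases (by omega : ht α = 1 ∨ 2 ≤ ht α) with h | h
      · exact absurd (eq_eps_of_ht_one hpos h) hns
      · exact h
    have hnval : (ht α).toNat = n := hn
    by_cases hik : i = k
    · subst hik
      rw [hstep, rho_sq]
    · -- i ≠ k
      have hbi : Bform G α (eps i) = 0 ∨ Bform G α (eps i) = -1 := by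
        have hge := B_root_eps_ge hneg hroot i
        rcases (by omega : Bform G α (eps i) = 0 ∨ Bform G α (eps i) = -1
            ∨ Bform G α (eps i) = -2) with h | h | h
        · exact Or.inl h
        · exact Or.inr h
        · exact absurd ⟨i, eq_eps_of_B_eq_neg_two hneg hroot i h⟩ hns
      have hcik : Bform G (eps i) (eps k) = cartan G i k := Bform_single G i k
      have hcki : Bform G (eps k) (eps i) = cartan G i k := by
        rw [Bform_single, cartan_symm]
      have hm01 : cartan G i k = 0 ∨ cartan G i k = 1 := by
        have h1 := cartan_offdiag_nonneg G hik
        have h2' := cartan_le_one_of_ne G hik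
        omega
      have hBβi : Bform G β (eps i)
          = Bform G α (eps i) + Bform G α (eps k) * cartan G i k := by
        rw [hβdef, Bform_reflect_left, hcki]
      have hBβk : Bform G β (eps k) = 1 := by
        rw [hβdef, Bform_reflect_left, Bform_single_self, hk1]; ring
      have htoβ : (ht β).toNat < n := by omega
      rcases hbi with hb0 | hb1
      · -- B(α, eps i) = 0 : reflect G i α = α
        have hre : reflect G i α = α := reflect_eq_of_B_zero hb0
        rw [hre]
        rcases hm01 with hm0 | hm1
        · -- non adjacent i k
          have hBβi0 : Bform G β (eps i) = 0 := by rw [hBβi, hb0, hm0]; ring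
          have hreβ : reflect G i β = β := reflect_eq_of_B_zero hBβi0
          have hFβ : F ρ a β = ρ (sGen G i) (F ρ a β) := by
            have := IH _ htoβ β hβroot hβpos rfl i (by omega) (by rw [hreβ]; exact hβpos)
            rw [hreβ] at this
            exact this
          rw [hstep]
          rw [rho_comm ρ (by rw [hcik, hm0]), ← hFβ]
        · -- adjacent i k
          have hBβi1 : Bform G β (eps i) = -1 := by rw [hBβi, hb0, hk1, hm1]; ring
          set γ := reflect G i β with hγdef
          have hγroot : IsRoot G γ := isRoot_reflect G i hβroot
          have hγpos : IsPos γ := by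
            by_contra hnp
            have hβeq := eq_eps_of_reflect_not_pos hneg hβroot hβpos hnp
            rw [hβeq, Bform_single_self] at hBβi1
            omega
          have htγ : ht γ = ht α - 2 := by rw [hγdef, ht_reflect, hBβi1, htβ]; ring
          have hFγ : F ρ a γ = ρ (sGen G i) (F ρ a β) :=
            IH _ htoβ β hβroot hβpos rfl i (by omega) (by rw [← hγdef]; exact hγpos)
          have hBγk : Bform G γ (eps k) = 0 := by
            rw [hγdef, Bform_reflect_left, hBβk, hBβi1, hcik, hm1]; ring
          have hreγ : reflect G k γ = γ := reflect_eq_of_B_zero hBγk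
          have htoγ : (ht γ).toNat < n := by omega
          have hFγk : F ρ a γ = ρ (sGen G k) (F ρ a γ) := by
            have := IH _ htoγ γ hγroot hγpos rfl k (by omega) (by rw [hreγ]; exact hγpos)
            rw [hreγ] at this
            exact this
          -- F β = ρ s_i (F γ)
          have hFβ : F ρ a β = ρ (sGen G i) (F ρ a γ) := by
            rw [hFγ, rho_sq]
          rw [hstep, hFβ]
          rw [rho_braid ρ (by rw [hcik, hm1]), ← hFγk]
      · -- B(α, eps i) = -1
        set δ := reflect G i α with hδdef
        have hδroot : IsRoot G δ := isRoot_reflect G i hroot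
        have htδ : ht δ = ht α - 1 := by rw [hδdef, ht_reflect, hb1]; ring
        have htoδ : (ht δ).toNat < n := by omega
        rcases hm01 with hm0 | hm1
        · -- non adjacent i k
          have hBβi1 : Bform G β (eps i) = -1 := by rw [hBβi, hb1, hm0]; ring
          set γ := reflect G i β with hγdef
          have hγroot : IsRoot G γ := isRoot_reflect G i hβroot
          have hγpos : IsPos γ := by
            by_contra hnp
            have hβeq := eq_eps_of_reflect_not_pos hneg hβroot hβpos hnp
            rw [hβeq, Bform_single_self] at hBβi1
            omega
          have hFγ : F ρ a γ = ρ (sGen G i) (F ρ a β) :=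
            IH _ htoβ β hβroot hβpos rfl i (by omega) (by rw [← hγdef]; exact hγpos)
          have hcomm : reflect G k δ = γ := by
            rw [hδdef, hγdef, hβdef]
            exact reflect_comm (i := k) (k := i) (by rw [hcki, hm0]) α
          have hBδk : Bform G δ (eps k) = -1 := by
            rw [hδdef, Bform_reflect_left, hb1, hk1, hcik, hm0]; ring
          have hFδk : F ρ a γ = ρ (sGen G k) (F ρ a δ) := by
            have := IH _ htoδ δ hδroot hposr rfl k (by omega) (by rw [hcomm]; exact hγpos)
            rw [hcomm] at this
            exact this
          have hFδ : F ρ a δ = ρ (sGen G k) (F ρ a γ) := by rw [hFδk, rho_sq]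
          rw [hstep, hFδ, hFγ, rho_comm ρ (by rw [hcki, hm0])]
        · -- adjacent i k : forced α = eps i + eps k
          have hBβi2 : Bform G β (eps i) = -2 := by rw [hBβi, hb1, hk1, hm1]; ring
          have hβeq : β = eps i := eq_eps_of_B_eq_neg_two hneg hβroot i hBβi2
          have hαeq : α = (eps i : I → ℤ) + eps k := by
            have h1 : reflect G k β = α := by rw [hβdef]; exact reflect_reflect G k α
            rw [← h1, hβeq, reflect, hcik, hm1, one_smul]
          have hrei : δ = eps k := by
            rw [hδdef, reflect, hb1, hαeq]
            funext m
            simp [Pi.single_apply]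
          have hAdjik : G.Adj i k := (cartan_eq_one_iff G hik).1 hm1
          rw [hrei, F_simple, hstep, hβeq, F_simple]
          have h3 : ρ (sGen G k) (a i) = ρ (sGen G i) (a k) := hadj k i hAdjik.symm
          rw [h3, rho_sq]

lemma F_reflect {α : I → ℤ} (hroot : IsRoot G α) (hpos : IsPos α) (i : I)
    (hposr : IsPos (reflect G i α)) :
    F ρ a (reflect G i α) = ρ (sGen G i) (F ρ a α) := by
  rcases le_or_gt (Bform G α (eps i)) 0 with h | h
  · exact claim ρ a hneg hnonadj hadj _ α hroot hpos rfl i h hposr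
  · set α' := reflect G i α with hα'def
    have hα'root : IsRoot G α' := isRoot_reflect G i hroot
    have hB' : Bform G α' (eps i) = - Bform G α (eps i) := by
      rw [hα'def, Bform_reflect_left, Bform_single_self]; ring
    have hre : reflect G i α' = α := by rw [hα'def]; exact reflect_reflect G i α
    have h1 : F ρ a (reflect G i α') = ρ (sGen G i) (F ρ a α') :=
      claim ρ a hneg hnonadj hadj _ α' hα'root hposr rfl i (by omega) (by rw [hre]; exact hpos)
    rw [hre] at h1
    rw [h1, rho_sq]

end Claim

section Assemble
variable {A : Type*} [AddCommGroup A] (ρ : ↥(Weyl G) →* Multiplicative (AddAut A)) (a : I → A)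

lemma exists_pos_coord {v : I → ℤ} (hroot : IsRoot G v) (hpos : IsPos v) :
    ∃ i, 0 < v i := by
  have hne := root_ne_zero hroot
  by_contra hc
  push_neg at hc
  exact hne (funext fun i => le_antisymm (hc i) (hpos i))

lemma not_isPos_neg {v : I → ℤ} (hroot : IsRoot G v) (hpos : IsPos v) :
    ¬ IsPos (-v) := by
  obtain ⟨i, hi⟩ := exists_pos_coord hroot hpos
  intro hP
  have := hP i
  rw [Pi.neg_apply] at this
  omega

instance isPos_decidable (v : I → ℤ) : Decidable (IsPos v) :=
  inferInstanceAs (Decidable (∀ i, 0 ≤ v i))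

/-- positive representative of a root -/
def posRep (α : Root G) : I → ℤ := if IsPos α.1 then α.1 else -α.1

lemma posRep_isRoot (α : Root G) : IsRoot G (posRep α) := by
  rw [posRep]
  split
  · exact α.2
  · exact isRoot_neg G α.2

lemma posRep_isPos (hneg : NegDef G) (α : Root G) : IsPos (posRep α) := by
  rw [posRep]
  split
  · assumption
  · rcases isPos_or_isPos_neg hneg α.2 with h | h
    · contradiction
    · exact h

lemma posRep_of_pos {α : Root G} (h : IsPos α.1) : posRep α = α.1 := if_pos h

lemma isPos_eps (i : I) : IsPos (eps i : I → ℤ) := by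
  intro j
  simp only [eps, Pi.single_apply]
  split <;> norm_num

variable (hneg : NegDef G)

/-- the candidate map on `Φ/±` -/
def gfun : RootMod G → A :=
  Quotient.lift (fun α : Root G => F ρ a (posRep α)) (by
    intro x y h
    rcases h with h | h
    · show F ρ a (posRep x) = F ρ a (posRep y)
      rw [posRep, posRep, h]
    · show F ρ a (posRep x) = F ρ a (posRep y)
      by_cases hy : IsPos y.1
      · have hx : ¬ IsPos x.1 := by
          rw [h]
          exact not_isPos_neg y.2 hy
        rw [posRep, posRep, if_neg hx, if_pos hy, h, neg_neg]
      · have hxpos : IsPos x.1 := by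
          rcases isPos_or_isPos_neg hneg x.2 with h' | h'
          · exact h'
          · exfalso
            apply hy
            have : y.1 = -x.1 := by rw [h, neg_neg]
            rw [this]
            exact h'
        rw [posRep, posRep, if_pos hxpos, if_neg hy, h])

lemma gfun_mk (α : Root G) :
    gfun ρ a hneg (Quotient.mk (rootSetoid G) α) = F ρ a (posRep α) := rfl

lemma gfun_cls (i : I) : gfun ρ a hneg (cls G i) = a i := by
  rw [cls, rcls, gfun_mk, posRep_of_pos (isPos_eps i), simpleRoot]
  exact F_simple ρ a i

lemma rmodSmul_mk (w : ↥(Weyl G)) (α : Root G) :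
    rmodSmul G w (Quotient.mk (rootSetoid G) α)
      = Quotient.mk (rootSetoid G) (rootSmul G w α) := rfl

lemma rootSmul_sGen (i : I) (α : Root G) :
    rootSmul G (sGen G i) α = ⟨reflect G i α.1, isRoot_reflect G i α.2⟩ :=
  Subtype.ext (sGen_apply i α.1)

lemma reflect_eps_self (i : I) : reflect G i (eps i : I → ℤ) = -(eps i) := by
  rw [reflect, Bform_single_self]
  module

lemma mk_eq_mk_posRep (α : Root G) :
    Quotient.mk (rootSetoid G) α
      = Quotient.mk (rootSetoid G) (⟨posRep α, posRep_isRoot α⟩ : Root G) := by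
  apply Quotient.sound
  show α.1 = posRep α ∨ α.1 = -(posRep α)
  rw [posRep]
  split
  · exact Or.inl rfl
  · exact Or.inr (neg_neg α.1).symm

variable (hnonadj : ∀ i j : I, ¬ G.Adj i j → ρ (sGen G i) (a j) = a j)
variable (hadj : ∀ i j : I, G.Adj i j → ρ (sGen G i) (a j) = ρ (sGen G j) (a i))

include hnonadj hadj in
lemma gfun_sGen (i : I) (c : RootMod G) :
    gfun ρ a hneg (rmodSmul G (sGen G i) c) = ρ (sGen G i) (gfun ρ a hneg c) := by
  induction c using Quotient.ind with
  | _ α =>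
  rw [mk_eq_mk_posRep]
  set β : Root G := ⟨posRep α, posRep_isRoot α⟩ with hβ
  have hβpos : IsPos β.1 := posRep_isPos hneg α
  have hβroot : IsRoot G β.1 := β.2
  rw [rmodSmul_mk, rootSmul_sGen]
  erw [gfun_mk, gfun_mk]
  rw [posRep_of_pos hβpos]
  by_cases hp : IsPos (reflect G i β.1)
  · rw [show posRep (⟨reflect G i β.1, isRoot_reflect G i β.2⟩ : Root G)
        = reflect G i β.1 from posRep_of_pos hp]
    exact F_reflect ρ a hneg hnonadj hadj hβroot hβpos i hp
  · have heq : β.1 = eps i := eq_eps_of_reflect_not_pos hneg hβroot hβpos hp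
    have hre : reflect G i β.1 = -(eps i) := by rw [heq]; exact reflect_eps_self i
    have hposneg : ¬ IsPos (reflect G i β.1) := hp
    have hposrep : posRep (⟨reflect G i β.1, isRoot_reflect G i β.2⟩ : Root G)
        = eps i := by
      unfold posRep
      rw [if_neg hposneg]
      show -(reflect G i β.1) = eps i
      rw [hre, neg_neg]
    rw [hposrep, heq, F_simple]
    exact (hnonadj i i (G.loopless.irrefl i)).symm

include hnonadj hadj in
lemma gfun_equivariant (w : ↥(Weyl G)) :
    ∀ c : RootMod G, gfun ρ a hneg (rmodSmul G w c) = ρ w (gfun ρ a hneg c) := by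
  obtain ⟨x, hx⟩ := w
  induction hx using Subgroup.closure_induction with
  | mem x hx =>
      intro c
      obtain ⟨i, rfl⟩ := hx
      exact gfun_sGen ρ a hneg hnonadj hadj i c
  | one =>
      intro c
      show gfun ρ a hneg (rmodSmul G (1 : ↥(Weyl G)) c) = ρ (1 : ↥(Weyl G)) (gfun ρ a hneg c)
      have h1 : rmodSmul G (1 : ↥(Weyl G)) c = c := by
        induction c using Quotient.ind with
        | _ α => rfl
      rw [h1, map_one]
      rfl
  | mul x y hx hy ihx ihy =>
      intro c
      have hmul : rmodSmul G (⟨x, hx⟩ * ⟨y, hy⟩ : ↥(Weyl G)) c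
          = rmodSmul G ⟨x, hx⟩ (rmodSmul G ⟨y, hy⟩ c) := by
        induction c using Quotient.ind with
        | _ α => rfl
      show gfun ρ a hneg (rmodSmul G (⟨x, hx⟩ * ⟨y, hy⟩ : ↥(Weyl G)) c)
          = ρ (⟨x, hx⟩ * ⟨y, hy⟩ : ↥(Weyl G)) (gfun ρ a hneg c)
      rw [hmul, ihx, ihy, rho_mul_apply]
  | inv x hx ihx =>
      intro c
      show gfun ρ a hneg (rmodSmul G (⟨x, hx⟩ : ↥(Weyl G))⁻¹ c)
          = ρ (⟨x, hx⟩ : ↥(Weyl G))⁻¹ (gfun ρ a hneg c)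
      set w : ↥(Weyl G) := ⟨x, hx⟩ with hw
      apply (Multiplicative.toAdd (ρ w)).injective
      have h2 : rmodSmul G w (rmodSmul G w⁻¹ c) = c := by
        induction c using Quotient.ind with
        | _ α =>
            show Quotient.mk (rootSetoid G) (rootSmul G w (rootSmul G w⁻¹ α))
              = Quotient.mk (rootSetoid G) α
            congr 1
            apply Subtype.ext
            show (w : (I → ℤ) ≃ₗ[ℤ] (I → ℤ)) (((w⁻¹ : ↥(Weyl G)) : (I → ℤ) ≃ₗ[ℤ] (I → ℤ)) α.1)
              = α.1
            have : ((w⁻¹ : ↥(Weyl G)) : (I → ℤ) ≃ₗ[ℤ] (I → ℤ)) α.1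
                = (w : (I → ℤ) ≃ₗ[ℤ] (I → ℤ)).symm α.1 := rfl
            rw [this]
            exact (w : (I → ℤ) ≃ₗ[ℤ] (I → ℤ)).apply_symm_apply α.1
      calc ρ w (gfun ρ a hneg (rmodSmul G w⁻¹ c))
          = gfun ρ a hneg (rmodSmul G w (rmodSmul G w⁻¹ c)) := (ihx _).symm
        _ = gfun ρ a hneg c := by rw [h2]
        _ = ρ w (ρ w⁻¹ (gfun ρ a hneg c)) := by
            rw [← rho_mul_apply, mul_inv_cancel, map_one]
            rfl

/-- the candidate homomorphism -/
def fh : (RootMod G →₀ ℤ) →+ A :=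
  Finsupp.liftAddHom fun c => zmultiplesHom A (gfun ρ a hneg c)

lemma fh_single (c : RootMod G) (m : ℤ) :
    fh ρ a hneg (Finsupp.single c m) = m • gfun ρ a hneg c :=
  Finsupp.liftAddHom_apply_single _ _ _

lemma wZQ_single (w : ↥(Weyl G)) (c : RootMod G) (m : ℤ) :
    wZQ G w (Finsupp.single c m) = Finsupp.single (rmodSmul G w c) m := by
  rw [wZQ, Finsupp.mapDomain.addMonoidHom_apply, Finsupp.mapDomain_single]

include hnonadj hadj in
lemma fh_equivariant (w : ↥(Weyl G)) (x : RootMod G →₀ ℤ) :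
    fh ρ a hneg (wZQ G w x) = ρ w (fh ρ a hneg x) := by
  induction x using Finsupp.induction_linear with
  | zero => rw [map_zero, map_zero, map_zero]
  | add f g hf hg => rw [map_add, map_add, hf, hg, ← map_add, ← map_add]
  | single c m =>
      rw [wZQ_single, fh_single, fh_single, gfun_equivariant ρ a hneg hnonadj hadj w c,
        map_zsmul]

include hneg in
lemma reach_pos : ∀ n : ℕ, ∀ v : I → ℤ, ∀ hroot : IsRoot G v, IsPos v → (ht v).toNat = n →
    ∃ (w : ↥(Weyl G)) (i : I),
      rmodSmul G w (cls G i) = Quotient.mk (rootSetoid G) (⟨v, hroot⟩ : Root G) := by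
  intro n
  induction n using Nat.strong_induction_on with
  | _ n IH =>
  intro v hroot hpos hn
  by_cases hns : ∃ j : I, v = eps j
  · obtain ⟨j, rfl⟩ := hns
    exact ⟨1, j, by
      have h1 : rmodSmul G (1 : ↥(Weyl G)) (cls G j) = cls G j := by
        rw [cls, rcls]
        rfl
      rw [h1, cls, rcls]
      rfl⟩
  · obtain ⟨k, hk⟩ := exists_B_neg hroot hpos
    set v' := reflect G k v with hv'
    have hroot' : IsRoot G v' := isRoot_reflect G k hroot
    have hpos' : IsPos v' := by
      by_contra hnp
      exact hns ⟨k, eq_eps_of_reflect_not_pos hneg hroot hpos hnp⟩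
    have hht : ht v' < ht v := by rw [hv', ht_reflect]; omega
    have hht1 := ht_pos_of_isPos hroot hpos
    have hht1' := ht_pos_of_isPos hroot' hpos'
    obtain ⟨w, i, hwi⟩ := IH (ht v').toNat (by omega) v' hroot' hpos' rfl
    refine ⟨sGen G k * w, i, ?_⟩
    have hmul : rmodSmul G (sGen G k * w) (cls G i)
        = rmodSmul G (sGen G k) (rmodSmul G w (cls G i)) := by
      rw [cls, rcls]
      rfl
    rw [hmul, hwi]
    erw [rmodSmul_mk, rootSmul_sGen]
    congr 1
    apply Subtype.ext
    show reflect G k v' = v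
    rw [hv']
    exact reflect_reflect G k v

include hneg in
lemma reach (c : RootMod G) :
    ∃ (w : ↥(Weyl G)) (i : I), rmodSmul G w (cls G i) = c := by
  induction c using Quotient.ind with
  | _ α =>
  rw [mk_eq_mk_posRep]
  exact reach_pos hneg (ht (posRep α)).toNat (posRep α) (posRep_isRoot α)
    (posRep_isPos hneg α) rfl

end Assemble

end ADEAux

/-- universal property of `ℤ[Φ/±]`: given elements `a_i` of a `W`-module `A`
with `s_i · a_j = a_j` when `i,j` are non-adjacent (in particular when `i = j`) and
`s_i · a_j = s_j · a_i` when `i,j` are adjacent, there is a unique `W`-equivariant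
homomorphism `ℤ[Φ/±] → A` with `t_{[e_i]} ↦ a_i`. -/
theorem exists_unique_equivariant_hom_from_ZPhiMod
    (G : SimpleGraph I) [DecidableRel G.Adj] (hconn : G.Connected) (hneg : NegDef G)
    {A : Type*} [AddCommGroup A] (ρ : ↥(Weyl G) →* Multiplicative (AddAut A)) (a : I → A)
    (hnonadj : ∀ i j : I, ¬ G.Adj i j → (Multiplicative.toAdd (ρ (sGen G i))) (a j) = a j)
    (hadj : ∀ i j : I, G.Adj i j →
      (Multiplicative.toAdd (ρ (sGen G i))) (a j) = (Multiplicative.toAdd (ρ (sGen G j))) (a i)) :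
    ∃! f : (RootMod G →₀ ℤ) →+ A,
      (∀ i : I, f (Finsupp.single (cls G i) 1) = a i) ∧
      (∀ (w : ↥(Weyl G)) (x : RootMod G →₀ ℤ), f (wZQ G w x) = (Multiplicative.toAdd (ρ w)) (f x)) := by
  have prop1 : ∀ i : I, ADEAux.fh ρ a hneg (Finsupp.single (cls G i) 1) = a i := by
    intro i
    rw [ADEAux.fh_single, ADEAux.gfun_cls, one_smul]
  have prop2 : ∀ (w : ↥(Weyl G)) (x : RootMod G →₀ ℤ),
      ADEAux.fh ρ a hneg (wZQ G w x) = ρ w (ADEAux.fh ρ a hneg x) :=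
    ADEAux.fh_equivariant ρ a hneg hnonadj hadj
  refine ⟨ADEAux.fh ρ a hneg, ⟨prop1, prop2⟩, ?_⟩
  rintro f' ⟨h1', h2'⟩
  apply Finsupp.addHom_ext
  intro c m
  obtain ⟨w, i, hwi⟩ := ADEAux.reach hneg c
  have hsm : (Finsupp.single c m : RootMod G →₀ ℤ) = m • Finsupp.single c 1 := by
    rw [Finsupp.smul_single, smul_eq_mul, mul_one]
  have key : ∀ f0 : (RootMod G →₀ ℤ) →+ A,
      (∀ i : I, f0 (Finsupp.single (cls G i) 1) = a i) →
      (∀ (w : ↥(Weyl G)) (x : RootMod G →₀ ℤ), f0 (wZQ G w x) = ρ w (f0 x)) →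
      f0 (Finsupp.single c m) = m • ρ w (a i) := by
    intro f0 hA hB
    have hs : wZQ G w (Finsupp.single (cls G i) 1) = Finsupp.single c 1 := by
      rw [ADEAux.wZQ_single, hwi]
    rw [hsm, map_zsmul, ← hs, hB, hA]
  rw [key f' h1' h2', key _ prop1 prop2]
end
end

section
/- Assume Γ is connected. Let P̄ denote the subgroup of ℤΦ generated by the elements T_α − T_{−α} (α ∈ Φ); it is stable under the W-action. Let A be an abelian group equipped with an action of W by additive automorphisms, and let a_i ∈ A (i ∈ I) be elements such that s_i · a_i = −a_i for all i, s_i · a_j = a_j whenever i ≠ j are not joined by an edge of Γ, and s_i · a_j = s_j · a_i whenever i and j are joined by an edge. Then there exists a unique W-equivariant group homomorphism f : P̄ → A with f(T_{e_i} − T_{−e_i}) = a_i for all i ∈ I. -/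
set_option linter.unusedSectionVars false

open Finset

noncomputable section

open ADE

variable {I : Type*} [Fintype I] [DecidableEq I]


namespace Aux

open ADE

variable {I : Type*} [Fintype I] [DecidableEq I] (G : SimpleGraph I) [DecidableRel G.Adj]

/-- shorthand for the simple root -/
abbrev ee (i : I) : I → ℤ := Pi.single i 1

/-- positivity of coordinates -/
def Pos (α : I → ℤ) : Prop := ∀ k, 0 ≤ α k

lemma single_inj {i j : I} (h : (Pi.single i 1 : I → ℤ) = Pi.single j 1) : i = j := by
  by_contra hne
  have h1 := congrFun h i
  simp [Pi.single_apply, hne, Ne.symm hne] at h1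

lemma cartan_offdiag_cases {i j : I} (h : i ≠ j) :
    cartan G i j = 0 ∨ cartan G i j = 1 := by
  by_cases hadj : G.Adj i j
  · right; simp [cartan, h, hadj]
  · left; simp [cartan, h, hadj]

lemma cartan_offdiag_nonneg {i j : I} (h : i ≠ j) : 0 ≤ cartan G i j := by
  rcases cartan_offdiag_cases G h with h' | h' <;> omega

lemma root_ne_zero {α : I → ℤ} (hα : IsRoot G α) : α ≠ 0 := by
  intro h; rw [h] at hα; unfold IsRoot at hα; simp at hα

lemma B_self_neg (hneg : NegDef G) {v : I → ℤ} (hv : v ≠ 0) : Bform G v v < 0 := by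
  have hv' : (fun i => (v i : ℝ)) ≠ 0 := by
    intro h
    exact hv (funext fun i => by
      have := congrFun h i; simp only [Pi.zero_apply] at this; exact_mod_cast this)
  have h := hneg _ hv'
  have hcast : ((Bform G v v : ℤ) : ℝ) = ∑ i, ∑ j, (v i : ℝ) * (cartan G i j : ℝ) * (v j : ℝ) := by
    rw [Bform_apply]; push_cast; rfl
  have : ((Bform G v v : ℤ) : ℝ) < 0 := by rw [hcast]; exact h
  exact_mod_cast this

lemma B_self_nonpos (hneg : NegDef G) (v : I → ℤ) : Bform G v v ≤ 0 := by
  rcases eq_or_ne v 0 with rfl | hv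
  · simp
  · exact le_of_lt (B_self_neg G hneg hv)

lemma B_self_even (v : I → ℤ) : Even (Bform G v v) := by
  rw [even_iff_two_dvd]
  have : ((Bform G v v : ℤ) : ZMod 2) = 0 := by
    rw [Bform_apply]
    push_cast
    have hprod : (∑ i, ∑ j, (v i : ZMod 2) * (cartan G i j : ℤ) * (v j : ZMod 2)) =
        ∑ p ∈ Finset.univ ×ˢ (Finset.univ : Finset I),
          (v p.1 : ZMod 2) * ((cartan G p.1 p.2 : ℤ) : ZMod 2) * (v p.2 : ZMod 2) := by
      rw [← Finset.sum_product']
    rw [hprod, ← Finset.diag_union_offDiag,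
      Finset.sum_union (Finset.disjoint_diag_offDiag _), Finset.sum_diag]
    have hdiag : ∀ i : I, (v i : ZMod 2) * ((cartan G i i : ℤ) : ZMod 2) * (v i : ZMod 2) = 0 := by
      intro i
      rw [cartan_diag]
      simp [show ((-2:ℤ) : ZMod 2) = 0 from by decide]
    have h1 : ∑ i : I, (v i : ZMod 2) * ((cartan G i i : ℤ) : ZMod 2) * (v i : ZMod 2) = 0 :=
      Finset.sum_eq_zero fun i _ => hdiag i
    rw [h1, zero_add]
    refine Finset.sum_involution (fun p _ => p.swap) ?_ ?_ ?_ ?_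
    · intro p hp
      have hsw : (v p.swap.1 : ZMod 2) * ((cartan G p.swap.1 p.swap.2 : ℤ) : ZMod 2) * (v p.swap.2 : ZMod 2)
          = (v p.1 : ZMod 2) * ((cartan G p.1 p.2 : ℤ) : ZMod 2) * (v p.2 : ZMod 2) := by
        simp only [Prod.fst_swap, Prod.snd_swap]
        rw [cartan_symm]; ring
      rw [hsw]
      exact CharTwo.add_self_eq_zero _
    · intro p hp _
      rw [Finset.mem_offDiag] at hp
      intro h
      apply hp.2.2
      have h1 : p.swap = p := h
      have h2 := congrArg Prod.fst h1
      simpa using h2.symm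
    · intro p hp
      rw [Finset.mem_offDiag] at hp ⊢
      exact ⟨Finset.mem_univ _, Finset.mem_univ _, fun h => hp.2.2 h.symm⟩
    · intro p _; rfl
  have h2 := (ZMod.intCast_zmod_eq_zero_iff_dvd (Bform G v v) 2).mp this
  exact_mod_cast h2

lemma B_self_le_neg_two (hneg : NegDef G) {v : I → ℤ} (hv : v ≠ 0) : Bform G v v ≤ -2 := by
  have h1 := B_self_neg G hneg hv
  obtain ⟨k, hk⟩ := B_self_even G v
  omega

/-- Dichotomy: every root is positive or negative. -/
lemma root_pos_or_neg (hneg : NegDef G) {α : I → ℤ} (hα : IsRoot G α) :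
    Pos α ∨ Pos (-α) := by
  by_contra hc
  push_neg at hc
  obtain ⟨h1, h2⟩ := hc
  unfold Pos at h1 h2
  push_neg at h1 h2
  obtain ⟨k, hk⟩ := h1
  obtain ⟨m, hm⟩ := h2
  rw [Pi.neg_apply] at hm
  set p : I → ℤ := fun k => max (α k) 0 with hp
  set q : I → ℤ := fun k => max (-α k) 0 with hq
  have hsub : α = p - q := by
    funext r
    simp only [Pi.sub_apply, hp, hq]
    omega
  have hpne : p ≠ 0 := by
    intro h
    have := congrFun h m
    simp only [hp, Pi.zero_apply] at this
    omega
  have hqne : q ≠ 0 := by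
    intro h
    have := congrFun h k
    simp only [hq, Pi.zero_apply] at this
    omega
  have hpq : 0 ≤ Bform G p q := by
    rw [Bform_apply]
    refine Finset.sum_nonneg fun i _ => Finset.sum_nonneg fun j _ => ?_
    rcases eq_or_ne i j with rfl | hij
    · have : p i * q i = 0 := by simp only [hp, hq]; rcases le_total (α i) 0 with h | h <;> simp [max_eq_left, max_eq_right, h] <;> omega
      calc p i * cartan G i i * q i = cartan G i i * (p i * q i) := by ring
        _ = 0 := by rw [this, mul_zero]
        _ ≥ 0 := le_refl 0
    · have h1 : 0 ≤ p i := le_max_right _ _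
      have h2 : 0 ≤ q j := le_max_right _ _
      have h3 : 0 ≤ cartan G i j := cartan_offdiag_nonneg G hij
      positivity
  have hexp : Bform G α α = Bform G p p - 2 * Bform G p q + Bform G q q := by
    rw [hsub]
    simp only [map_sub, LinearMap.sub_apply]
    have := Bform_comm G p q
    ring_nf
    rw [Bform_comm G q p]
    ring
  have hpp := B_self_le_neg_two G hneg hpne
  have hqq := B_self_le_neg_two G hneg hqne
  unfold IsRoot at hα
  omega

lemma B_expand_add (v w : I → ℤ) :
    Bform G (v + w) (v + w) = Bform G v v + 2 * Bform G v w + Bform G w w := by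
  simp only [map_add, LinearMap.add_apply]
  rw [Bform_comm G w v]; ring

lemma B_expand_sub (v w : I → ℤ) :
    Bform G (v - w) (v - w) = Bform G v v - 2 * Bform G v w + Bform G w w := by
  simp only [map_sub, LinearMap.sub_apply]
  rw [Bform_comm G w v]; ring

lemma B_single_range (hneg : NegDef G) {α : I → ℤ} (hα : IsRoot G α) (j : I) :
    -2 ≤ Bform G α (ee j) ∧ Bform G α (ee j) ≤ 2 := by
  have h1 := B_self_nonpos G hneg (α + ee j)
  have h2 := B_self_nonpos G hneg (α - ee j)
  rw [B_expand_add] at h1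
  rw [B_expand_sub] at h2
  rw [hα, Bform_single_self] at h1 h2
  constructor <;> omega

lemma B_eq_neg_two (hneg : NegDef G) {α : I → ℤ} (hα : IsRoot G α) {j : I}
    (h : Bform G α (ee j) = -2) : α = ee j := by
  have h2 := B_expand_sub G α (ee j)
  rw [hα, Bform_single_self, h] at h2
  have : α - ee j = 0 := by
    by_contra hne
    have := B_self_neg G hneg hne
    omega
  exact sub_eq_zero.mp this

lemma B_eq_two (hneg : NegDef G) {α : I → ℤ} (hα : IsRoot G α) {j : I}
    (h : Bform G α (ee j) = 2) : α = -ee j := by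
  have h2 := B_expand_add G α (ee j)
  rw [hα, Bform_single_self, h] at h2
  have : α + ee j = 0 := by
    by_contra hne
    have := B_self_neg G hneg hne
    omega
  exact eq_neg_of_add_eq_zero_left this

end Aux

namespace Aux

variable {I : Type*} [Fintype I] [DecidableEq I] (G : SimpleGraph I) [DecidableRel G.Adj]

open ADE

/-- height -/
noncomputable def ht (α : I → ℤ) : ℕ := (∑ i, α i).toNat

lemma ee_same (i : I) : ee i i = (1:ℤ) := Pi.single_eq_same i 1

lemma ee_ne {i k : I} (h : k ≠ i) : ee i k = (0:ℤ) := Pi.single_eq_of_ne h 1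

lemma B_sum_right (α : I → ℤ) : Bform G α α = ∑ i, α i * Bform G α (ee i) := by
  have hexp : ∑ i, α i • (Pi.single i 1 : I → ℤ) = α := by
    conv_rhs => rw [← Finset.univ_sum_single α]
    exact Finset.sum_congr rfl fun i _ => by
      rw [← Pi.single_smul, smul_eq_mul, mul_one]
  nth_rewrite 2 [← hexp]
  rw [map_sum]
  exact Finset.sum_congr rfl fun i _ => by rw [map_smul, smul_eq_mul]

lemma exists_descent (hneg : NegDef G) {α : I → ℤ} (hα : IsRoot G α) (hpos : Pos α)
    (hns : ∀ i, α ≠ ee i) : ∃ i, Bform G α (ee i) = -1 := by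
  by_contra hc
  push_neg at hc
  have hterm : ∀ i, 0 ≤ α i * Bform G α (ee i) := by
    intro i
    have hr := B_single_range G hneg hα i
    have hne2 : Bform G α (ee i) ≠ -2 := fun h => hns i (B_eq_neg_two G hneg hα h)
    have h0 : 0 ≤ Bform G α (ee i) := by have := hc i; omega
    exact mul_nonneg (hpos i) h0
  have := B_sum_right G α
  rw [hα] at this
  have hsum : 0 ≤ ∑ i, α i * Bform G α (ee i) := Finset.sum_nonneg fun i _ => hterm i
  omega

lemma pos_root_hts_pos {α : I → ℤ} (hα : IsRoot G α) (hpos : Pos α) : 1 ≤ ∑ i, α i := by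
  have hne := root_ne_zero G hα
  have : ∃ k, α k ≠ 0 := by
    by_contra h; push_neg at h; exact hne (funext fun k => h k)
  obtain ⟨k, hk⟩ := this
  have h1 : 1 ≤ α k := by have := hpos k; omega
  calc (1 : ℤ) ≤ α k := h1
    _ ≤ ∑ i, α i := Finset.single_le_sum (fun i _ => hpos i) (Finset.mem_univ k)

lemma root_le_single {α : I → ℤ} (hα : IsRoot G α) (hpos : Pos α) {j : I}
    (hle : ∀ k, α k ≤ (ee j : I → ℤ) k) : α = ee j := by
  have hj : α j = 0 ∨ α j = 1 := by
    have h1 := hpos j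
    have h2 := hle j
    rw [ee_same] at h2
    omega
  rcases hj with hj | hj
  · exfalso
    apply root_ne_zero G hα
    funext k
    simp only [Pi.zero_apply]
    rcases eq_or_ne k j with rfl | hk
    · exact hj
    · have h1 := hpos k
      have h2 := hle k
      rw [ee_ne hk] at h2
      omega
  · funext k
    rcases eq_or_ne k j with rfl | hk
    · rw [ee_same]; exact hj
    · have h1 := hpos k
      have h2 := hle k
      rw [ee_ne hk] at h2
      rw [show (ee j : I → ℤ) k = 0 from ee_ne hk]
      omega

lemma reflect_eq_sub {α : I → ℤ} {j : I} (hB : Bform G α (ee j) = -1) :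
    reflect G j α = α - ee j := by
  unfold reflect
  rw [hB]
  simp [sub_eq_add_neg]

lemma reflect_eq_add {α : I → ℤ} {j : I} (hB : Bform G α (ee j) = 1) :
    reflect G j α = α + ee j := by
  unfold reflect
  rw [hB, one_smul]

lemma reflect_eq_self {α : I → ℤ} {j : I} (hB : Bform G α (ee j) = 0) :
    reflect G j α = α := by
  unfold reflect
  rw [hB, zero_smul, add_zero]

lemma descent_root {α : I → ℤ} {j : I} (hα : IsRoot G α) (hB : Bform G α (ee j) = -1) :
    IsRoot G (α - ee j) := by
  rw [← reflect_eq_sub G hB]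
  exact isRoot_reflect G j hα

lemma descent_pos (hneg : NegDef G) {α : I → ℤ} {j : I} (hα : IsRoot G α) (hpos : Pos α)
    (hB : Bform G α (ee j) = -1) : Pos (α - ee j) := by
  have hroot := descent_root G hα hB
  rcases root_pos_or_neg G hneg hroot with h | h
  · exact h
  · exfalso
    have hle : ∀ k, α k ≤ (ee j : I → ℤ) k := by
      intro k
      have := h k
      simp only [Pi.neg_apply, Pi.sub_apply] at this
      omega
    have := root_le_single G hα hpos hle
    rw [this, Bform_single_self] at hB
    omega

lemma sum_single (j : I) : ∑ i, (ee j : I → ℤ) i = 1 := by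
  simp [Pi.single_apply]

lemma descent_sum {α : I → ℤ} (j : I) :
    ∑ i, (α - ee j : I → ℤ) i = (∑ i, α i) - 1 := by
  simp only [Pi.sub_apply]
  rw [Finset.sum_sub_distrib, sum_single]

lemma pos_root_ht_one {α : I → ℤ} (hα : IsRoot G α) (hpos : Pos α)
    (h1 : ∑ i, α i = 1) : ∃ j, α = ee j := by
  have hne := root_ne_zero G hα
  have : ∃ k, α k ≠ 0 := by
    by_contra h; push_neg at h; exact hne (funext fun k => h k)
  obtain ⟨k, hk⟩ := this
  refine ⟨k, ?_⟩
  apply root_le_single G hα hpos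
  intro m
  rcases eq_or_ne m k with h | hm
  · rw [h, ee_same]
    have : ∑ i ∈ (Finset.univ.erase k), α i = 1 - α k := by
      rw [← h1, Finset.sum_erase_eq_sub (Finset.mem_univ k)]
    have hsum : 0 ≤ ∑ i ∈ (Finset.univ.erase k), α i :=
      Finset.sum_nonneg fun i _ => hpos i
    omega
  · rw [ee_ne hm]
    have h2 : 1 ≤ α k := by have := hpos k; omega
    have : ∑ i ∈ (Finset.univ.erase k), α i = 1 - α k := by
      rw [← h1, Finset.sum_erase_eq_sub (Finset.mem_univ k)]
    have hsum : α m ≤ ∑ i ∈ (Finset.univ.erase k), α i :=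
      Finset.single_le_sum (fun i _ => hpos i) (by simp [hm])
    omega

/-- a positive root with a `-1` pairing against `e_j` has height ≥ 2 -/
lemma descent_ht2 (hneg : NegDef G) {α : I → ℤ} {j : I} (hα : IsRoot G α) (hpos : Pos α)
    (hB : Bform G α (ee j) = -1) : 2 ≤ ∑ i, α i := by
  have hroot := descent_root G hα hB
  have hpos' := descent_pos G hneg hα hpos hB
  have h1 := pos_root_hts_pos G hroot hpos'
  rw [descent_sum] at h1
  omega

end Aux

namespace Aux

variable {I : Type*} [Fintype I] [DecidableEq I] (G : SimpleGraph I) [DecidableRel G.Adj]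

open ADE

lemma B_ee (i j : I) : Bform G (ee i) (ee j) = cartan G i j := Bform_single G i j

lemma reflect_def (j : I) (v : I → ℤ) :
    reflect G j v = v + Bform G v (ee j) • (ee j : I → ℤ) := rfl

lemma reflect_comm {i j : I} (hc : cartan G i j = 0) (v : I → ℤ) :
    reflect G i (reflect G j v) = reflect G j (reflect G i v) := by
  simp only [reflect_def, map_add, LinearMap.add_apply, map_smul, LinearMap.smul_apply,
    smul_eq_mul, B_ee, hc, cartan_symm G j i ▸ hc]
  module

lemma reflect_braid {i j : I} (hc : cartan G i j = 1) (v : I → ℤ) :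
    reflect G i (reflect G j (reflect G i v)) = reflect G j (reflect G i (reflect G j v)) := by
  have h1 : cartan G j i = 1 := by rw [cartan_symm]; exact hc
  have hii : cartan G i i = -2 := cartan_diag G i
  have hjj : cartan G j j = -2 := cartan_diag G j
  simp only [reflect_def, map_add, LinearMap.add_apply, map_smul, LinearMap.smul_apply,
    smul_eq_mul, B_ee]
  rw [hc, h1, hii, hjj]
  module

lemma weyl_coe_mul (x y : ↥(Weyl G)) (v : I → ℤ) :
    ((x * y : ↥(Weyl G)) : (I → ℤ) ≃ₗ[ℤ] (I → ℤ)) v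
      = (x : (I → ℤ) ≃ₗ[ℤ] (I → ℤ)) ((y : (I → ℤ) ≃ₗ[ℤ] (I → ℤ)) v) := rfl

lemma sGen_apply (i : I) (v : I → ℤ) :
    ((sGen G i : ↥(Weyl G)) : (I → ℤ) ≃ₗ[ℤ] (I → ℤ)) v = reflect G i v :=
  reflectEquiv_apply G i v

lemma sGen_sq (i : I) : sGen G i * sGen G i = 1 := by
  apply Subtype.ext
  apply LinearEquiv.toLinearMap_injective
  apply LinearMap.ext
  intro v
  show ((sGen G i * sGen G i : ↥(Weyl G)) : (I → ℤ) ≃ₗ[ℤ] (I → ℤ)) v = v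
  rw [weyl_coe_mul, sGen_apply, sGen_apply]
  exact reflect_reflect G i v

lemma sGen_comm {i j : I} (hc : cartan G i j = 0) :
    sGen G i * sGen G j = sGen G j * sGen G i := by
  apply Subtype.ext
  apply LinearEquiv.toLinearMap_injective
  apply LinearMap.ext
  intro v
  show ((sGen G i * sGen G j : ↥(Weyl G)) : (I → ℤ) ≃ₗ[ℤ] (I → ℤ)) v
    = ((sGen G j * sGen G i : ↥(Weyl G)) : (I → ℤ) ≃ₗ[ℤ] (I → ℤ)) v
  rw [weyl_coe_mul, weyl_coe_mul]
  simp only [sGen_apply]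
  exact reflect_comm G hc v

lemma sGen_braid {i j : I} (hc : cartan G i j = 1) :
    sGen G i * sGen G j * sGen G i = sGen G j * sGen G i * sGen G j := by
  apply Subtype.ext
  apply LinearEquiv.toLinearMap_injective
  apply LinearMap.ext
  intro v
  show ((sGen G i * sGen G j * sGen G i : ↥(Weyl G)) : (I → ℤ) ≃ₗ[ℤ] (I → ℤ)) v
    = ((sGen G j * sGen G i * sGen G j : ↥(Weyl G)) : (I → ℤ) ≃ₗ[ℤ] (I → ℤ)) v
  rw [weyl_coe_mul, weyl_coe_mul, weyl_coe_mul, weyl_coe_mul]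
  simp only [sGen_apply]
  exact reflect_braid G hc v

instance mulAddAutCoeFun {A : Type*} [AddCommGroup A] :
    CoeFun (Multiplicative (AddAut A)) (fun _ => A → A) :=
  ⟨fun f => ((Multiplicative.toAdd f : AddAut A) : A → A)⟩

lemma mAut_mul_apply {A : Type*} [AddCommGroup A] (e₁ e₂ : Multiplicative (AddAut A)) (m : A) :
    (e₁ * e₂) m = e₁ (e₂ m) := rfl

lemma mAut_one_apply {A : Type*} [AddCommGroup A] (m : A) :
    (1 : Multiplicative (AddAut A)) m = m := rfl

section rho

variable {A : Type*} [AddCommGroup A] (ρ : ↥(Weyl G) →* Multiplicative (AddAut A))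

lemma rho_sq (i : I) (x : A) : ρ (sGen G i) (ρ (sGen G i) x) = x := by
  rw [← mAut_mul_apply, ← map_mul, sGen_sq, map_one, mAut_one_apply]

lemma rho_comm {i j : I} (hc : cartan G i j = 0) (x : A) :
    ρ (sGen G i) (ρ (sGen G j) x) = ρ (sGen G j) (ρ (sGen G i) x) := by
  rw [← mAut_mul_apply, ← map_mul, sGen_comm G hc, map_mul, mAut_mul_apply]

lemma rho_braid {i j : I} (hc : cartan G i j = 1) (x : A) :
    ρ (sGen G i) (ρ (sGen G j) (ρ (sGen G i) x))
      = ρ (sGen G j) (ρ (sGen G i) (ρ (sGen G j) x)) := by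
  rw [← mAut_mul_apply, ← mAut_mul_apply, ← map_mul, ← map_mul,
    sGen_braid G hc, map_mul ρ, map_mul ρ, mAut_mul_apply, mAut_mul_apply]

end rho

lemma rootSmul_coe (w : ↥(Weyl G)) (α : Root G) :
    (rootSmul G w α).1 = (w : (I → ℤ) ≃ₗ[ℤ] (I → ℤ)) α.1 := rfl

lemma rootSmul_sGen (i : I) (α : Root G) :
    (rootSmul G (sGen G i) α).1 = reflect G i α.1 := sGen_apply G i α.1

lemma rootSmul_mul (w w' : ↥(Weyl G)) (α : Root G) :
    rootSmul G (w * w') α = rootSmul G w (rootSmul G w' α) := Subtype.ext rfl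

lemma rootSmul_one (α : Root G) : rootSmul G 1 α = α := Subtype.ext rfl

lemma rootSmul_neg (w : ↥(Weyl G)) (α : Root G) :
    rootSmul G w (negRoot G α) = negRoot G (rootSmul G w α) :=
  Subtype.ext (map_neg (w : (I → ℤ) ≃ₗ[ℤ] (I → ℤ)) α.1)

end Aux

namespace Aux

variable {I : Type*} [Fintype I] [DecidableEq I] (G : SimpleGraph I) [DecidableRel G.Adj]
  {A : Type*} [AddCommGroup A] (ρ : ↥(Weyl G) →* Multiplicative (AddAut A)) (a : I → A)

open ADE

noncomputable def bp : ℕ → (I → ℤ) → A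
  | 0, _ => 0
  | n+1, α =>
    if h1 : ∃ i, α = (Pi.single i 1 : I → ℤ) then a h1.choose
    else if h2 : ∃ i, Bform G α (Pi.single i 1) = -1 then
      ρ (sGen G h2.choose) (bp n (reflect G h2.choose α))
    else 0

lemma bp_single (i : I) : bp G ρ a 1 (ee i) = a i := by
  have h1 : ∃ k, (ee i : I → ℤ) = Pi.single k 1 := ⟨i, rfl⟩
  simp only [bp]
  rw [dif_pos h1]
  exact congrArg a (single_inj h1.choose_spec).symm

lemma ht_coe {α : I → ℤ} (hpos : Pos α) : ((ht α : ℕ) : ℤ) = ∑ i, α i :=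
  Int.toNat_of_nonneg (Finset.sum_nonneg fun i _ => hpos i)

lemma ht_single (j : I) : ht ((ee j : I → ℤ)) = 1 := by
  unfold ht
  rw [sum_single]
  rfl

lemma adj_of_cartan {i j : I} (h : cartan G i j = 1) : G.Adj i j := by
  by_cases hij : i = j
  · subst hij; rw [cartan_diag] at h; omega
  · by_cases hadj : G.Adj i j
    · exact hadj
    · exfalso; simp [cartan, hij, hadj] at h

lemma not_adj_of_cartan {i j : I} (hij : i ≠ j) (h : cartan G i j = 0) : ¬ G.Adj i j := by
  intro hadj
  simp [cartan, hij, hadj] at h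

lemma B_sub_single {α : I → ℤ} (i0 j : I) :
    Bform G (α - ee i0) (ee j) = Bform G α (ee j) - cartan G i0 j := by
  simp only [map_sub, LinearMap.sub_apply, B_ee]

/-- The main inductive lemma. -/
lemma bp_main (hneg : NegDef G)
    (hnonadj : ∀ i j : I, i ≠ j → ¬ G.Adj i j → ρ (sGen G i) (a j) = a j)
    (hadj : ∀ i j : I, G.Adj i j → ρ (sGen G i) (a j) = ρ (sGen G j) (a i)) :
    ∀ n : ℕ, ∀ α : I → ℤ, IsRoot G α → Pos α → ht α = n →
      (∀ j, Bform G α (ee j) = -1 →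
        bp G ρ a n α = ρ (sGen G j) (bp G ρ a (n-1) (α - ee j)))
      ∧ (∀ j, Bform G α (ee j) = 0 →
        ρ (sGen G j) (bp G ρ a n α) = bp G ρ a n α) := by
  intro n
  induction n using Nat.strong_induction_on with
  | _ n IH =>
  intro α hα hpos hht
  have hhts := pos_root_hts_pos G hα hpos
  have hcoe := ht_coe (α := α) hpos
  by_cases hsimple : ∃ i, α = (Pi.single i 1 : I → ℤ)
  · obtain ⟨k, rfl⟩ := hsimple
    have hn1 : n = 1 := by rw [← hht]; exact ht_single k
    subst hn1
    constructor
    · intro j hBj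
      exfalso
      rcases eq_or_ne k j with rfl | hkj
      · rw [Bform_single_self] at hBj; omega
      · rw [B_ee] at hBj
        rcases cartan_offdiag_cases G hkj with h | h <;> omega
    · intro j hBj
      have hkj : k ≠ j := by
        rintro rfl; rw [Bform_single_self] at hBj; omega
      rw [B_ee] at hBj
      have hnadj : ¬ G.Adj j k := fun h => not_adj_of_cartan G hkj hBj h.symm
      rw [bp_single]
      exact hnonadj j k (Ne.symm hkj) hnadj
  · obtain ⟨m, rfl⟩ : ∃ m, n = m + 1 := by
      refine ⟨n - 1, ?_⟩
      have h1 : 1 ≤ n := by omega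
      omega
    have hdesc : ∃ i, Bform G α (Pi.single i 1) = -1 :=
      exists_descent G hneg hα hpos (by push_neg at hsimple; exact hsimple)
    set i0 := hdesc.choose with hi0
    have hBi0 : Bform G α (ee i0) = -1 := hdesc.choose_spec
    have hbp : bp G ρ a (m+1) α = ρ (sGen G i0) (bp G ρ a m (α - ee i0)) := by
      simp only [bp]
      rw [dif_neg hsimple, dif_pos hdesc, reflect_eq_sub G hBi0]
    set β := α - ee i0 with hβ
    have hβroot := descent_root G hα hBi0
    have hβpos := descent_pos G hneg hα hpos hBi0
    have hβcoe := ht_coe (α := β) hβpos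
    have hβsum : ∑ i, β i = (∑ i, α i) - 1 := descent_sum (α := α) i0
    have hβht : ht β = m := by omega
    have IHβ := IH m (by omega) β hβroot hβpos hβht
    constructor
    · intro j hBj
      simp only [Nat.add_sub_cancel]
      by_cases hji : j = i0
      · subst hji; exact hbp
      · rcases cartan_offdiag_cases G (show i0 ≠ j from Ne.symm hji) with hc | hc
        · -- non-adjacent case
          have hBβj : Bform G β (ee j) = -1 := by
            rw [hβ, B_sub_single, hBj, hc]; ring
          have hroot_j := descent_root G hα hBj
          have hpos_j := descent_pos G hneg hα hpos hBj
          have hjcoe := ht_coe (α := α - ee j) hpos_j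
          have hjsum : ∑ i, (α - ee j) i = (∑ i, α i) - 1 := descent_sum (α := α) j
          have hht_j : ht (α - ee j) = m := by omega
          have IHj := IH m (by omega) (α - ee j) hroot_j hpos_j hht_j
          have hB2 : Bform G (α - ee j) (ee i0) = -1 := by
            rw [B_sub_single, hBi0]
            have : cartan G j i0 = 0 := by rw [cartan_symm]; exact hc
            rw [this]; ring
          rw [hbp, IHβ.1 j hBβj, IHj.1 i0 hB2]
          have hveq : β - ee j = α - ee j - ee i0 := by rw [hβ]; abel
          rw [hveq]
          exact rho_comm G ρ hc _
        · -- adjacent case: α = ee j + ee i0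
          have hBβj : Bform G β (ee j) = -2 := by
            rw [hβ, B_sub_single, hBj, hc]; ring
          have hβj : β = ee j := B_eq_neg_two G hneg hβroot hBβj
          have hαj : α - ee j = ee i0 := by
            have : α = β + ee i0 := by rw [hβ]; abel
            rw [this, hβj]; abel
          have hm1 : m = 1 := by rw [← hβht, hβj, ht_single]
          subst hm1
          rw [hbp, hβj, hαj, bp_single, bp_single]
          exact hadj i0 j (adj_of_cartan G hc)
    · intro j hBj
      have hji : j ≠ i0 := by
        rintro rfl; rw [hBj] at hBi0; omega
      rcases cartan_offdiag_cases G (show i0 ≠ j from Ne.symm hji) with hc | hc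
      · have hBβj : Bform G β (ee j) = 0 := by
          rw [hβ, B_sub_single, hBj, hc]; ring
        rw [hbp, rho_comm G ρ (show cartan G j i0 = 0 by rw [cartan_symm]; exact hc)]
        exact congrArg (ρ (sGen G i0)) (IHβ.2 j hBβj)
      · have hBβj : Bform G β (ee j) = -1 := by
          rw [hβ, B_sub_single, hBj, hc]; ring
        have hγroot := descent_root G hβroot hBβj
        have hγpos := descent_pos G hneg hβroot hβpos hBβj
        have hγcoe := ht_coe (α := β - ee j) hγpos
        have hγsum : ∑ i, (β - ee j) i = (∑ i, β i) - 1 := descent_sum (α := β) j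
        have hγhts := pos_root_hts_pos G hγroot hγpos
        have hγht : ht (β - ee j) = m - 1 := by omega
        have IHγ := IH (m-1) (by omega) (β - ee j) hγroot hγpos hγht
        have hBγi0 : Bform G (β - ee j) (ee i0) = 0 := by
          rw [B_sub_single, hβ, B_sub_single, hBi0, cartan_diag]
          have : cartan G j i0 = 1 := by rw [cartan_symm]; exact hc
          rw [this]; ring
        rw [hbp, IHβ.1 j hBβj]
        rw [rho_braid G ρ (show cartan G j i0 = 1 by rw [cartan_symm]; exact hc)]
        rw [IHγ.2 i0 hBγi0]

end Aux

namespace Aux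

variable {I : Type*} [Fintype I] [DecidableEq I] (G : SimpleGraph I) [DecidableRel G.Adj]
  {A : Type*} [AddCommGroup A] (ρ : ↥(Weyl G) →* Multiplicative (AddAut A)) (a : I → A)

open ADE

instance decPos (v : I → ℤ) : Decidable (Pos v) :=
  decidable_of_iff (∀ k, 0 ≤ v k) Iff.rfl

noncomputable def bfull (α : Root G) : A :=
  if Pos α.1 then bp G ρ a (ht α.1) α.1 else - bp G ρ a (ht (-α.1)) (-α.1)

lemma not_pos_neg {v : I → ℤ} (hv : v ≠ 0) (h : Pos v) : ¬ Pos (-v) := by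
  intro h'
  apply hv
  funext k
  have h1 := h k
  have h2 := h' k
  simp only [Pi.neg_apply, Pi.zero_apply] at *
  omega

lemma pos_single (i : I) : Pos ((ee i : I → ℤ)) := by
  intro k
  rcases eq_or_ne k i with rfl | h
  · rw [ee_same]; omega
  · rw [ee_ne h]

lemma bfull_val_pos {v : I → ℤ} (hr : IsRoot G v) (hp : Pos v) :
    bfull G ρ a ⟨v, hr⟩ = bp G ρ a (ht v) v := by
  unfold bfull
  rw [if_pos hp]

lemma bfull_simple (i : I) : bfull G ρ a (simpleRoot G i) = a i := by
  have : bfull G ρ a (simpleRoot G i) = bp G ρ a (ht ((ee i : I → ℤ))) (ee i) :=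
    bfull_val_pos G ρ a (isRoot_single G i) (pos_single i)
  rw [this, ht_single, bp_single]

lemma bfull_neg_root (hneg : NegDef G) (α : Root G) :
    bfull G ρ a (negRoot G α) = - bfull G ρ a α := by
  have hne := root_ne_zero G α.2
  have hval : (negRoot G α).1 = -α.1 := rfl
  rcases root_pos_or_neg G hneg α.2 with h | h
  · have h' : ¬ Pos (-α.1) := not_pos_neg hne h
    unfold bfull
    rw [if_pos h, hval, if_neg h', neg_neg]
  · have h' : ¬ Pos α.1 := by
      intro hp
      exact not_pos_neg hne hp h
    unfold bfull
    rw [if_neg h', hval, if_pos h, neg_neg]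

lemma B_add_single {α : I → ℤ} (i0 j : I) :
    Bform G (α + ee i0) (ee j) = Bform G α (ee j) + cartan G i0 j := by
  simp only [map_add, LinearMap.add_apply, B_ee]

lemma reflect_single_self (j : I) : reflect G j (ee j) = -(ee j : I → ℤ) := by
  rw [reflect_def, Bform_single_self]
  module

lemma bfull_reflect_pos (hneg : NegDef G)
    (hdiag : ∀ i : I, ρ (sGen G i) (a i) = - a i)
    (hnonadj : ∀ i j : I, i ≠ j → ¬ G.Adj i j → ρ (sGen G i) (a j) = a j)
    (hadj : ∀ i j : I, G.Adj i j → ρ (sGen G i) (a j) = ρ (sGen G j) (a i)) (j : I) (α : Root G) (hp : Pos α.1) :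
    bfull G ρ a (rootSmul G (sGen G j) α) = ρ (sGen G j) (bfull G ρ a α) := by
  obtain ⟨v, hr⟩ := α
  simp only at hp ⊢
  have hrange := B_single_range G hneg hr j
  have hmain := bp_main G ρ a hneg hnonadj hadj
  have hc : Bform G v (ee j) = -2 ∨ Bform G v (ee j) = -1 ∨ Bform G v (ee j) = 0
      ∨ Bform G v (ee j) = 1 ∨ Bform G v (ee j) = 2 := by omega
  have hsval : (rootSmul G (sGen G j) ⟨v, hr⟩).1 = reflect G j v := rootSmul_sGen G j _
  rcases hc with hB | hB | hB | hB | hB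
  · -- v = e_j
    have hv : v = ee j := B_eq_neg_two G hneg hr hB
    subst hv
    have h1 : rootSmul G (sGen G j) ⟨ee j, hr⟩ = negRoot G (simpleRoot G j) := by
      apply Subtype.ext
      rw [hsval, reflect_single_self]
      rfl
    have h2 : (⟨ee j, hr⟩ : Root G) = simpleRoot G j := Subtype.ext rfl
    rw [h1, h2, bfull_neg_root G ρ a hneg, bfull_simple, hdiag j]
  · -- descent case
    have hroot' := descent_root G hr hB
    have hpos' := descent_pos G hneg hr hp hB
    have hsum' : ∑ i, (v - ee j) i = (∑ i, v i) - 1 := descent_sum (α := v) j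
    have hc1 := ht_coe (α := v) hp
    have hc2 := ht_coe (α := v - ee j) hpos'
    have hh1 := pos_root_hts_pos G hroot' hpos'
    have hhtv : ht (v - ee j) = ht v - 1 := by omega
    have heq : rootSmul G (sGen G j) ⟨v, hr⟩ = ⟨v - ee j, hroot'⟩ := by
      apply Subtype.ext; rw [hsval, reflect_eq_sub G hB]
    rw [heq, bfull_val_pos G ρ a hroot' hpos', bfull_val_pos G ρ a hr hp,
      (hmain (ht v) v hr hp rfl).1 j hB, rho_sq G ρ, hhtv]
  · -- fixed case
    have heq : rootSmul G (sGen G j) ⟨v, hr⟩ = ⟨v, hr⟩ := by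
      apply Subtype.ext; rw [hsval, reflect_eq_self G hB]
    rw [heq, bfull_val_pos G ρ a hr hp]
    exact ((hmain (ht v) v hr hp rfl).2 j hB).symm
  · -- ascent case
    have hroot' : IsRoot G (v + ee j) := by
      rw [← reflect_eq_add G hB]; exact isRoot_reflect G j hr
    have hpos' : Pos (v + ee j) := fun k => by
      simp only [Pi.add_apply]; exact add_nonneg (hp k) (pos_single j k)
    have hB' : Bform G (v + ee j) (ee j) = -1 := by
      rw [B_add_single, hB, cartan_diag]; ring
    have hsum' : ∑ i, (v + ee j) i = (∑ i, v i) + 1 := by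
      simp only [Pi.add_apply]; rw [Finset.sum_add_distrib, sum_single]
    have hc1 := ht_coe (α := v) hp
    have hc2 := ht_coe (α := v + ee j) hpos'
    have hh1 := pos_root_hts_pos G hr hp
    have hhtv : ht (v + ee j) = ht v + 1 := by omega
    have heq : rootSmul G (sGen G j) ⟨v, hr⟩ = ⟨v + ee j, hroot'⟩ := by
      apply Subtype.ext; rw [hsval, reflect_eq_add G hB]
    have hcancel : v + ee j - ee j = v := add_sub_cancel_right v (ee j)
    have hstep := (hmain (ht (v + ee j)) (v + ee j) hroot' hpos' rfl).1 j hB'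
    rw [hcancel, hhtv, Nat.add_sub_cancel] at hstep
    rw [heq, bfull_val_pos G ρ a hroot' hpos', bfull_val_pos G ρ a hr hp, hhtv, hstep]
  · -- v = -e_j : contradicts positivity
    exfalso
    have hv := B_eq_two G hneg hr hB
    have h1 := hp j
    rw [hv] at h1
    simp only [Pi.neg_apply] at h1
    rw [ee_same] at h1
    omega

lemma bfull_reflect (hneg : NegDef G)
    (hdiag : ∀ i : I, ρ (sGen G i) (a i) = - a i)
    (hnonadj : ∀ i j : I, i ≠ j → ¬ G.Adj i j → ρ (sGen G i) (a j) = a j)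
    (hadj : ∀ i j : I, G.Adj i j → ρ (sGen G i) (a j) = ρ (sGen G j) (a i)) (j : I) (α : Root G) :
    bfull G ρ a (rootSmul G (sGen G j) α) = ρ (sGen G j) (bfull G ρ a α) := by
  rcases root_pos_or_neg G hneg α.2 with h | h
  · exact bfull_reflect_pos G ρ a hneg hdiag hnonadj hadj j α h
  · have hα' : α = negRoot G (negRoot G α) := Subtype.ext (neg_neg _).symm
    have hpos' : Pos (negRoot G α).1 := h
    rw [hα', rootSmul_neg, bfull_neg_root G ρ a hneg,
      bfull_neg_root G ρ a hneg, map_neg,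
      bfull_reflect_pos G ρ a hneg hdiag hnonadj hadj j (negRoot G α) hpos']

lemma bfull_equiv (hneg : NegDef G)
    (hdiag : ∀ i : I, ρ (sGen G i) (a i) = - a i)
    (hnonadj : ∀ i j : I, i ≠ j → ¬ G.Adj i j → ρ (sGen G i) (a j) = a j)
    (hadj : ∀ i j : I, G.Adj i j → ρ (sGen G i) (a j) = ρ (sGen G j) (a i)) (w : ↥(Weyl G)) (α : Root G) :
    bfull G ρ a (rootSmul G w α) = ρ w (bfull G ρ a α) := by
  obtain ⟨u, hu⟩ := w
  revert α
  refine Subgroup.closure_induction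
    (p := fun u hu => ∀ α : Root G,
      bfull G ρ a (rootSmul G ⟨u, hu⟩ α) = ρ ⟨u, hu⟩ (bfull G ρ a α)) ?_ ?_ ?_ ?_ hu
  · rintro x ⟨i, rfl⟩ α
    have hx : (⟨reflectEquiv G i, Subgroup.subset_closure ⟨i, rfl⟩⟩ : ↥(Weyl G)) = sGen G i :=
      Subtype.ext rfl
    rw [hx]
    exact bfull_reflect G ρ a hneg hdiag hnonadj hadj i α
  · intro α
    have h1 : (⟨1, Subgroup.one_mem _⟩ : ↥(Weyl G)) = 1 := Subtype.ext rfl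
    rw [h1, rootSmul_one, map_one, mAut_one_apply]
  · intro x y hx hy ihx ihy α
    have h1 : (⟨x * y, Subgroup.mul_mem _ hx hy⟩ : ↥(Weyl G)) = ⟨x, hx⟩ * ⟨y, hy⟩ :=
      Subtype.ext rfl
    rw [h1, rootSmul_mul, ihx, ihy, map_mul, mAut_mul_apply]
  · intro x hx ihx α
    have h1 : (⟨x⁻¹, Subgroup.inv_mem _ hx⟩ : ↥(Weyl G)) = (⟨x, hx⟩ : ↥(Weyl G))⁻¹ :=
      Subtype.ext rfl
    rw [h1]
    have h2 := ihx (rootSmul G (⟨x, hx⟩ : ↥(Weyl G))⁻¹ α)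
    rw [← rootSmul_mul, mul_inv_cancel, rootSmul_one] at h2
    rw [h2, ← mAut_mul_apply, ← map_mul, inv_mul_cancel, map_one, mAut_one_apply]

/-- every root lies in the Weyl orbit of a simple root -/
lemma orbit (hneg : NegDef G) (α : Root G) :
    ∃ (w : ↥(Weyl G)) (i : I), rootSmul G w (simpleRoot G i) = α := by
  have hposcase : ∀ n : ℕ, ∀ α : Root G, Pos α.1 → ht α.1 = n →
      ∃ (w : ↥(Weyl G)) (i : I), rootSmul G w (simpleRoot G i) = α := by
    intro n
    induction n using Nat.strong_induction_on with
    | _ n IH =>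
    rintro ⟨v, hr⟩ hp hht
    simp only at hp hht
    by_cases hsimple : ∃ i, v = (Pi.single i 1 : I → ℤ)
    · obtain ⟨i, rfl⟩ := hsimple
      exact ⟨1, i, Subtype.ext rfl⟩
    · obtain ⟨i, hB⟩ := exists_descent G hneg hr hp (by push_neg at hsimple; exact hsimple)
      have hroot' := descent_root G hr hB
      have hpos' := descent_pos G hneg hr hp hB
      have hsum' : ∑ k, (v - ee i) k = (∑ k, v k) - 1 := descent_sum (α := v) i
      have hc1 := ht_coe (α := v) hp
      have hc2 := ht_coe (α := v - ee i) hpos'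
      have hh1 := pos_root_hts_pos G hroot' hpos'
      have hlt : ht (v - ee i) < n := by omega
      obtain ⟨w, k, hw⟩ := IH (ht (v - ee i)) hlt ⟨v - ee i, hroot'⟩ hpos' rfl
      refine ⟨sGen G i * w, k, ?_⟩
      rw [rootSmul_mul, hw]
      apply Subtype.ext
      refine (rootSmul_sGen G i _).trans ?_
      have hB' : Bform G (v - ee i) (ee i) = 1 := by
        rw [B_sub_single, hB, cartan_diag]; ring
      rw [reflect_eq_add G hB']
      simp
  rcases root_pos_or_neg G hneg α.2 with h | h
  · exact hposcase (ht α.1) α h rfl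
  · obtain ⟨w, i, hw⟩ := hposcase (ht (negRoot G α).1) (negRoot G α) h rfl
    refine ⟨w * sGen G i, i, ?_⟩
    rw [rootSmul_mul]
    have h1 : rootSmul G (sGen G i) (simpleRoot G i) = negRoot G (simpleRoot G i) := by
      apply Subtype.ext
      rw [rootSmul_sGen]
      exact reflect_single_self G i
    rw [h1, rootSmul_neg, hw]
    apply Subtype.ext
    exact (neg_neg _)

end Aux

namespace Aux

variable {I : Type*} [Fintype I] [DecidableEq I] (G : SimpleGraph I) [DecidableRel G.Adj]
  {A : Type*} [AddCommGroup A] (ρ : ↥(Weyl G) →* Multiplicative (AddAut A)) (a : I → A)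

open ADE

/-- the canonical generator of `P̄` attached to a root -/
noncomputable def pgen (α : Root G) : Root G →₀ ℤ :=
  Finsupp.single α 1 - Finsupp.single (negRoot G α) 1

lemma pgen_mem (α : Root G) : pgen G α ∈ Pbar G :=
  AddSubgroup.subset_closure ⟨α, rfl⟩

noncomputable def bsel (α : Root G) : A := if Pos α.1 then bfull G ρ a α else 0

noncomputable def Fhom : (Root G →₀ ℤ) →+ A :=
  Finsupp.liftAddHom fun α => zmultiplesHom A (bsel G ρ a α)

lemma Fhom_single (α : Root G) : Fhom G ρ a (Finsupp.single α 1) = bsel G ρ a α := by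
  unfold Fhom
  rw [Finsupp.liftAddHom_apply_single, zmultiplesHom_apply, one_smul]

lemma Fhom_pgen (hneg : NegDef G) (α : Root G) :
    Fhom G ρ a (pgen G α) = bfull G ρ a α := by
  unfold pgen
  rw [map_sub, Fhom_single, Fhom_single]
  have hne := root_ne_zero G α.2
  by_cases h : Pos α.1
  · have h' : ¬ Pos (negRoot G α).1 := not_pos_neg hne h
    unfold bsel
    rw [if_pos h, if_neg h', sub_zero]
  · have h' : Pos (negRoot G α).1 := by
      rcases root_pos_or_neg G hneg α.2 with h2 | h2
      · exact absurd h2 h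
      · exact h2
    unfold bsel
    rw [if_neg h, if_pos h', bfull_neg_root G ρ a hneg, zero_sub, neg_neg]

lemma wZPhi_pgen (w : ↥(Weyl G)) (α : Root G) :
    wZPhi G w (pgen G α) = pgen G (rootSmul G w α) := by
  unfold pgen wZPhi
  rw [map_sub]
  show Finsupp.mapDomain (rootSmul G w) (Finsupp.single α 1)
      - Finsupp.mapDomain (rootSmul G w) (Finsupp.single (negRoot G α) 1) = _
  rw [Finsupp.mapDomain_single, Finsupp.mapDomain_single, rootSmul_neg]

lemma pbar_stable (w : ↥(Weyl G)) : ∀ x ∈ Pbar G, wZPhi G w x ∈ Pbar G := by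
  intro x hx
  refine AddSubgroup.closure_induction (p := fun y _ => wZPhi G w y ∈ Pbar G)
    ?_ ?_ ?_ ?_ hx
  · rintro y ⟨α, rfl⟩
    rw [show Finsupp.single α 1 - Finsupp.single (negRoot G α) 1 = pgen G α from rfl,
      wZPhi_pgen]
    exact pgen_mem G _
  · show wZPhi G w 0 ∈ Pbar G
    rw [map_zero]; exact (Pbar G).zero_mem
  · intro y z _ _ hy hz
    show wZPhi G w (y + z) ∈ Pbar G
    rw [map_add]; exact (Pbar G).add_mem hy hz
  · intro y _ hy
    show wZPhi G w (-y) ∈ Pbar G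
    rw [map_neg]; exact (Pbar G).neg_mem hy

lemma Fhom_equiv (hneg : NegDef G)
    (hdiag : ∀ i : I, ρ (sGen G i) (a i) = - a i)
    (hnonadj : ∀ i j : I, i ≠ j → ¬ G.Adj i j → ρ (sGen G i) (a j) = a j)
    (hadj : ∀ i j : I, G.Adj i j → ρ (sGen G i) (a j) = ρ (sGen G j) (a i))
    (w : ↥(Weyl G)) : ∀ x ∈ Pbar G, Fhom G ρ a (wZPhi G w x) = ρ w (Fhom G ρ a x) := by
  intro x hx
  refine AddSubgroup.closure_induction
    (p := fun y _ => Fhom G ρ a (wZPhi G w y) = ρ w (Fhom G ρ a y)) ?_ ?_ ?_ ?_ hx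
  · rintro y ⟨α, rfl⟩
    rw [show Finsupp.single α 1 - Finsupp.single (negRoot G α) 1 = pgen G α from rfl,
      wZPhi_pgen, Fhom_pgen G ρ a hneg, Fhom_pgen G ρ a hneg,
      bfull_equiv G ρ a hneg hdiag hnonadj hadj]
  · show Fhom G ρ a (wZPhi G w 0) = ρ w (Fhom G ρ a 0)
    simp only [map_zero]
  · intro y z _ _ hy hz
    show Fhom G ρ a (wZPhi G w (y + z)) = ρ w (Fhom G ρ a (y + z))
    simp only [map_add, hy, hz]
  · intro y _ hy
    show Fhom G ρ a (wZPhi G w (-y)) = ρ w (Fhom G ρ a (-y))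
    simp only [map_neg, hy]

end Aux

open Aux in
/-- the subgroup `P̄ ⊆ ℤΦ` generated by the `T_α − T_{−α}` is stable under the
`W`-action, and it has the following universal property: given elements `a_i` of a
`W`-module `A` with `s_i · a_i = −a_i`, `s_i · a_j = a_j` for `i ≠ j` non-adjacent and
`s_i · a_j = s_j · a_i` for `i, j` adjacent, there is a unique `W`-equivariant homomorphism
`P̄ → A` with `T_{e_i} − T_{−e_i} ↦ a_i`. -/
theorem exists_unique_equivariant_hom_from_Pbar
    (G : SimpleGraph I) [DecidableRel G.Adj] (hconn : G.Connected) (hneg : NegDef G)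
    {A : Type*} [AddCommGroup A] (ρ : ↥(Weyl G) →* Multiplicative (AddAut A)) (a : I → A)
    (hdiag : ∀ i : I, Multiplicative.toAdd (ρ (sGen G i)) (a i) = - a i)
    (hnonadj : ∀ i j : I, i ≠ j → ¬ G.Adj i j → Multiplicative.toAdd (ρ (sGen G i)) (a j) = a j)
    (hadj : ∀ i j : I, G.Adj i j → Multiplicative.toAdd (ρ (sGen G i)) (a j) = Multiplicative.toAdd (ρ (sGen G j)) (a i)) :
    (∀ (w : ↥(Weyl G)), ∀ x ∈ Pbar G, wZPhi G w x ∈ Pbar G) ∧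
    ∃! f : ↥(Pbar G) →+ A,
      (∀ i : I,
        f ⟨Finsupp.single (simpleRoot G i) 1 - Finsupp.single (negRoot G (simpleRoot G i)) 1,
          AddSubgroup.subset_closure ⟨simpleRoot G i, rfl⟩⟩ = a i) ∧
      (∀ (w : ↥(Weyl G)) (x : ↥(Pbar G)) (hx : wZPhi G w x.1 ∈ Pbar G),
        f ⟨wZPhi G w x.1, hx⟩ = Multiplicative.toAdd (ρ w) (f x)) := by
  refine ⟨pbar_stable G, ?_⟩
  set F : ↥(Pbar G) →+ A := (Fhom G ρ a).comp (Pbar G).subtype with hF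
  have hFval : ∀ (x : I → ℤ) (hx : True), True := fun _ _ => trivial
  have hprop1 : ∀ i : I,
      F ⟨Finsupp.single (simpleRoot G i) 1 - Finsupp.single (negRoot G (simpleRoot G i)) 1,
        AddSubgroup.subset_closure ⟨simpleRoot G i, rfl⟩⟩ = a i := by
    intro i
    show Fhom G ρ a (pgen G (simpleRoot G i)) = a i
    rw [Fhom_pgen G ρ a hneg, bfull_simple]
  have hprop2 : ∀ (w : ↥(Weyl G)) (x : ↥(Pbar G)) (hx : wZPhi G w x.1 ∈ Pbar G),
      F ⟨wZPhi G w x.1, hx⟩ = ρ w (F x) := by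
    intro w x hx
    show Fhom G ρ a (wZPhi G w x.1) = ρ w (Fhom G ρ a x.1)
    exact Fhom_equiv G ρ a hneg hdiag hnonadj hadj w x.1 x.2
  refine ⟨F, ⟨hprop1, hprop2⟩, ?_⟩
  rintro f ⟨h1, h2⟩
  apply AddMonoidHom.ext
  rintro ⟨x, hx⟩
  have hgen : ∀ (α : Root G) (hy : pgen G α ∈ Pbar G), f ⟨pgen G α, hy⟩ = F ⟨pgen G α, hy⟩ := by
    intro α hy
    obtain ⟨w, i, hw⟩ := orbit G hneg α
    have hmem0 : pgen G (simpleRoot G i) ∈ Pbar G := pgen_mem G _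
    have hval : wZPhi G w (pgen G (simpleRoot G i)) = pgen G α := by
      rw [wZPhi_pgen, hw]
    have hmem : wZPhi G w (pgen G (simpleRoot G i)) ∈ Pbar G :=
      pbar_stable G w _ hmem0
    have hsub : (⟨pgen G α, hy⟩ : ↥(Pbar G))
        = ⟨wZPhi G w (pgen G (simpleRoot G i)), hmem⟩ := Subtype.ext hval.symm
    rw [hsub]
    rw [h2 w ⟨pgen G (simpleRoot G i), hmem0⟩ hmem,
      hprop2 w ⟨pgen G (simpleRoot G i), hmem0⟩ hmem]
    have ha1 : f ⟨pgen G (simpleRoot G i), hmem0⟩ = a i := h1 i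
    have ha2 : F ⟨pgen G (simpleRoot G i), hmem0⟩ = a i := hprop1 i
    rw [ha1, ha2]
  have key : ∀ (x : Root G →₀ ℤ) (hx : x ∈ Pbar G), f ⟨x, hx⟩ = F ⟨x, hx⟩ := by
    intro x hx
    refine AddSubgroup.closure_induction
      (p := fun y hy => f ⟨y, hy⟩ = F ⟨y, hy⟩) ?_ ?_ ?_ ?_ hx
    · rintro y ⟨α, rfl⟩
      exact hgen α _
    · show f 0 = F 0
      rw [map_zero, map_zero]
    · intro y z hy hz ihy ihz
      show f (⟨y, hy⟩ + ⟨z, hz⟩) = F (⟨y, hy⟩ + ⟨z, hz⟩)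
      rw [map_add, map_add, ihy, ihz]
    · intro y hy ihy
      show f (-⟨y, hy⟩) = F (-⟨y, hy⟩)
      rw [map_neg, map_neg, ihy]
  exact key x hx
end
end
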